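/- arXiv:1606.08077 — 12 statements merged into one kernel-verified Lean document; each statement's English description precedes it below -/
import Mathlib

section
/- Fix a preference ≽^sing on the single items in S with x_1 ≽^sing x_2 ≽^sing ⋯ ≽^sing x_m, and for each k ∈ {1,…,m} let I_k = {x_1,…,x_k}. If a subset T ⊆ S satisfies |I_k ∩ T| ≥ k/2 for all k ∈ {1,…,m}, then T is necessarily agreeable with respect to ≽^sing. -/
open Finset

/-- A preference on subsets: a complete (total, hence reflexive) and transitive relation. -/
def IsPref {m : ℕ} (R : Finset (Fin m) → Finset (Fin m) → Prop) : Prop :=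
  (∀ A B, R A B ∨ R B A) ∧ ∀ A B C, R A B → R B C → R A C

/-- A preference on single items: a complete and transitive relation. -/
def IsSingPref {m : ℕ} (Rs : Fin m → Fin m → Prop) : Prop :=
  (∀ x y, Rs x y ∨ Rs y x) ∧ ∀ x y z, Rs x y → Rs y z → Rs x z

/-- A preference is monotonic if `T ∪ {x} ≽ T` for every subset `T` and item `x`. -/
def MonotonicPref {m : ℕ} (R : Finset (Fin m) → Finset (Fin m) → Prop) : Prop :=
  ∀ (T : Finset (Fin m)) (x : Fin m), R (insert x T) T

/-- A preference on subsets is responsive w.r.t. a preference `Rs` on single items if it is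
monotonic and `(T \ {y}) ∪ {x} ≽ T` whenever `x ∉ T`, `y ∈ T` and `x ≽ˢ y`. -/
def Responsive {m : ℕ} (Rs : Fin m → Fin m → Prop)
    (R : Finset (Fin m) → Finset (Fin m) → Prop) : Prop :=
  MonotonicPref R ∧
    ∀ (T : Finset (Fin m)) (x y : Fin m),
      x ∉ T → y ∈ T → Rs x y → R (insert x (T.erase y)) T

/-- A preference on subsets is consistent with a preference on single items if its
restriction to singletons agrees with it. -/
def Consistent {m : ℕ} (Rs : Fin m → Fin m → Prop)
    (R : Finset (Fin m) → Finset (Fin m) → Prop) : Prop :=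
  ∀ x y : Fin m, R {x} {y} ↔ Rs x y

/-- `T` is necessarily agreeable w.r.t. `Rs` if `T ≽ Tᶜ` for every responsive preference
consistent with `Rs`. -/
def NecAgreeable {m : ℕ} (Rs : Fin m → Fin m → Prop) (T : Finset (Fin m)) : Prop :=
  ∀ R : Finset (Fin m) → Finset (Fin m) → Prop,
    IsPref R → Responsive Rs R → Consistent Rs R → R T Tᶜ

/-- `T` is possibly agreeable w.r.t. `Rs` if `T ≻ Tᶜ` for some responsive preference
consistent with `Rs`. -/
def PossAgreeable {m : ℕ} (Rs : Fin m → Fin m → Prop) (T : Finset (Fin m)) : Prop :=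
  ∃ R : Finset (Fin m) → Finset (Fin m) → Prop,
    IsPref R ∧ Responsive Rs R ∧ Consistent Rs R ∧ R T Tᶜ ∧ ¬ R Tᶜ T


section Aux
variable {m : ℕ} {Rs : Fin m → Fin m → Prop} {R : Finset (Fin m) → Finset (Fin m) → Prop}

lemma r_refl (hR : IsPref R) (A : Finset (Fin m)) : R A A := (hR.1 A A).elim id id

lemma r_superset (hR : IsPref R) (hM : MonotonicPref R) :
    ∀ n (A C : Finset (Fin m)), A.card ≤ C.card + n → C ⊆ A → R A C := by
  intro n
  induction n with
  | zero =>
    intro A C hc hs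
    rw [Finset.eq_of_subset_of_card_le hs (by omega)]
    exact r_refl hR A
  | succ n ih =>
    intro A C hc hs
    rcases eq_or_ne C A with hCA | hne
    · rw [hCA]; exact r_refl hR A
    · obtain ⟨x, hxA, hxC⟩ := Finset.exists_of_ssubset (hs.ssubset_of_ne hne)
      have h1 : insert x C ⊆ A := Finset.insert_subset hxA hs
      have h2 : (insert x C).card = C.card + 1 := Finset.card_insert_of_notMem hxC
      exact hR.2 _ _ _ (ih A (insert x C) (by omega) h1) (hM C x)

lemma r_key (hR : IsPref R) (hResp : Responsive Rs R) (hord : ∀ i j : Fin m, i ≤ j → Rs i j)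
    (T : Finset (Fin m)) (f : Fin m → Fin m) :
    ∀ n (B C : Finset (Fin m)), B.card ≤ n → Disjoint B T → Set.InjOn f B →
      (∀ y ∈ B, f y ∈ T ∧ f y ≤ y) → C ⊆ T → (∀ y ∈ B, f y ∉ C) → R T (B ∪ C) := by
  intro n
  induction n with
  | zero =>
    intro B C hc hd _ _ hCT _
    have hB : B = ∅ := Finset.card_eq_zero.mp (by omega)
    subst hB
    rw [Finset.empty_union]
    exact r_superset hR hResp.1 T.card T C (by omega) hCT
  | succ n ih =>
    intro B C hc hd hinj hf hCT hfC
    rcases Finset.eq_empty_or_nonempty B with rfl | ⟨y, hy⟩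
    · rw [Finset.empty_union]
      exact r_superset hR hResp.1 T.card T C (by omega) hCT
    · set x := f y with hx
      have hxT : x ∈ T := (hf y hy).1
      have hxy : x ≤ y := (hf y hy).2
      have hyT : y ∉ T := Finset.disjoint_left.mp hd hy
      have hyC : y ∉ C := fun hyC => hyT (hCT hyC)
      have hxB : x ∉ B := fun hxB => Finset.disjoint_left.mp hd hxB hxT
      have hxC : x ∉ C := hfC y hy
      have hstep : R (insert x ((B ∪ C).erase y)) (B ∪ C) :=
        hResp.2 (B ∪ C) x y (by simp [hxB, hxC]) (Finset.mem_union_left _ hy)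
          (hord x y hxy)
      have heq : insert x ((B ∪ C).erase y) = (B.erase y) ∪ insert x C := by
        ext a
        simp only [Finset.mem_insert, Finset.mem_erase, Finset.mem_union]
        constructor
        · rintro (rfl | ⟨hne, hB | hC⟩)
          · exact Or.inr (Or.inl rfl)
          · exact Or.inl ⟨hne, hB⟩
          · exact Or.inr (Or.inr hC)
        · rintro (⟨hne, hB⟩ | (rfl | hC))
          · exact Or.inr ⟨hne, Or.inl hB⟩
          · exact Or.inl rfl
          · exact Or.inr ⟨fun hay => hyC (hay ▸ hC), Or.inr hC⟩
      have hcard : (B.erase y).card ≤ n := by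
        have := Finset.card_erase_of_mem hy
        have := Finset.card_pos.mpr ⟨y, hy⟩
        omega
      have hrest : R T ((B.erase y) ∪ insert x C) := by
        apply ih (B.erase y) (insert x C) hcard
          (hd.mono_left (Finset.erase_subset _ _))
          (hinj.mono (by intro a ha; exact Finset.mem_of_mem_erase ha))
          (fun z hz => hf z (Finset.mem_of_mem_erase hz))
          (Finset.insert_subset hxT hCT)
        intro z hz
        simp only [Finset.mem_insert]
        rintro (hfz | hfz)
        · exact (Finset.mem_erase.mp hz).1
            (hinj (Finset.mem_of_mem_erase hz) hy hfz)
        · exact hfC z (Finset.mem_of_mem_erase hz) hfz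
      rw [heq] at hstep
      exact hR.2 _ _ _ hrest hstep

end Aux

/-- If `x_1 ≽ˢ x_2 ≽ˢ ⋯ ≽ˢ x_m` (item `x_k` corresponds to `(k-1 : Fin m)`) and
`|I_k ∩ T| ≥ k/2` for all `k ∈ {1,…,m}` (where `I_k = {x_1,…,x_k}` consists of the items
of index `< k`), then `T` is necessarily agreeable w.r.t. `Rs`. -/
theorem stmt_2 {m : ℕ} (Rs : Fin m → Fin m → Prop) (hRs : IsSingPref Rs)
    (hord : ∀ i j : Fin m, i ≤ j → Rs i j)
    (T : Finset (Fin m))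
    (h : ∀ k : ℕ, 1 ≤ k → k ≤ m → k ≤ 2 * (T.filter (fun x => x.val < k)).card) :
    NecAgreeable Rs T := by
  classical
  -- counting: for each a, #(Tᶜ ≤ a) ≤ #(T ≤ a)
  have hcount : ∀ a : Fin m, (Tᶜ.filter (· ≤ a)).card ≤ (T.filter (· ≤ a)).card := by
    intro a
    have hk := h (a.val + 1) (by omega) (by omega)
    have hsum : (T.filter (· ≤ a)).card + (Tᶜ.filter (· ≤ a)).card
        = (Finset.univ.filter (fun x : Fin m => x ≤ a)).card := by
      rw [← Finset.card_union_of_disjoint]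
      · congr 1
        rw [← Finset.filter_union]
        congr 1
        simp [Finset.union_comm]
      · exact Finset.disjoint_filter_filter disjoint_compl_right
    have huniv : (Finset.univ.filter (fun x : Fin m => x ≤ a)).card = a.val + 1 := by
      have : (Finset.univ.filter (fun x : Fin m => x ≤ a)) = Finset.Iic a := by
        ext x; simp
      rw [this]; exact Fin.card_Iic a
    have hfe : (T.filter (fun x => x.val < a.val + 1)) = T.filter (· ≤ a) := by
      apply Finset.filter_congr
      intro x _
      exact Nat.lt_succ_iff.trans Fin.le_def.symm
    rw [hfe] at hk
    omega
  -- Hall's theorem gives a matching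
  have hHall : ∃ f : {y // y ∈ Tᶜ} → Fin m, Function.Injective f ∧
      ∀ y : {y // y ∈ Tᶜ}, f y ∈ T.filter (· ≤ y.val) := by
    rw [← Finset.all_card_le_biUnion_card_iff_exists_injective]
    intro s
    rcases s.eq_empty_or_nonempty with rfl | hs
    · simp
    · obtain ⟨y₀, hy₀, hmax⟩ := s.exists_max_image (fun y => y.val) hs
      have h1 : s.card ≤ (Tᶜ.filter (· ≤ y₀.val)).card := by
        apply Finset.card_le_card_of_injOn (fun y => y.val)
        · intro y hy
          simp only [Finset.mem_coe, Finset.mem_filter]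
          exact ⟨y.2, hmax y hy⟩
        · intro a _ b _ hab; exact Subtype.ext hab
      have h2 := Finset.subset_biUnion_of_mem
        (fun (y : {y // y ∈ Tᶜ}) => T.filter (fun x => x ≤ y.val)) hy₀
      calc s.card ≤ (Tᶜ.filter (· ≤ y₀.val)).card := h1
        _ ≤ (T.filter (· ≤ y₀.val)).card := hcount y₀.val
        _ ≤ _ := Finset.card_le_card h2
  obtain ⟨f0, hf0inj, hf0mem⟩ := hHall
  set f : Fin m → Fin m := fun y => if hy : y ∈ Tᶜ then f0 ⟨y, hy⟩ else y with hfdef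
  intro R hR hResp _
  have := r_key hR hResp hord T f Tᶜ.card Tᶜ ∅ le_rfl ?_ ?_ ?_ (Finset.empty_subset T)
    (by simp)
  · simpa using this
  · simp [Finset.disjoint_left]
  · intro a ha b hb hab
    have ha' : a ∈ Tᶜ := ha
    have hb' : b ∈ Tᶜ := hb
    simp only [hfdef] at hab
    rw [dif_pos ha', dif_pos hb'] at hab
    exact Subtype.ext_iff.mp (hf0inj hab)
  · intro y hy
    have := hf0mem ⟨y, hy⟩
    simp only [Finset.mem_filter] at this
    refine ⟨?_, ?_⟩ <;> simp only [hfdef, dif_pos hy]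
    · exact this.1
    · exact this.2
end

section
/- Fix a strict preference ≽^sing on the single items in S with x_1 ≻^sing x_2 ≻^sing ⋯ ≻^sing x_m, and for each k ∈ {1,…,m} let I_k = {x_1,…,x_k}. If a subset T ⊆ S is necessarily agreeable with respect to ≽^sing, then |I_k ∩ T| ≥ k/2 for all k ∈ {1,…,m}. -/
open Finset

/-- If `x_1 ≻ˢ x_2 ≻ˢ ⋯ ≻ˢ x_m` (a strict ordering) and `T` is necessarily agreeable
w.r.t. `Rs`, then `|I_k ∩ T| ≥ k/2` for all `k ∈ {1,…,m}`. -/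
theorem stmt_3 {m : ℕ} (Rs : Fin m → Fin m → Prop) (hRs : IsSingPref Rs)
    (hord : ∀ i j : Fin m, i ≤ j → Rs i j)
    (hstrict : ∀ i j : Fin m, i < j → ¬ Rs j i)
    (T : Finset (Fin m)) (hT : NecAgreeable Rs T) :
    ∀ k : ℕ, 1 ≤ k → k ≤ m → k ≤ 2 * (T.filter (fun x => x.val < k)).card := by

  intro k hk1 hkm
  by_contra hcon
  push_neg at hcon
  -- utility function with a big gap at k
  set u : Fin m → ℕ := fun x => (if x.val < k then m*m+1 else 0) + (m - x.val) with hu_def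
  have hustrict : ∀ a b : Fin m, a < b → u b < u a := by
    intro a b hab
    have h1 : m - b.val < m - a.val :=
      Nat.sub_lt_sub_left a.isLt (by exact_mod_cast hab)
    have h2 : (if b.val < k then m*m+1 else 0) ≤ (if a.val < k then m*m+1 else 0) := by
      by_cases hb : b.val < k
      · have ha : a.val < k := lt_trans (by exact_mod_cast hab) hb
        simp [ha, hb]
      · simp [hb]
    simp only [hu_def]
    omega
  have hu_anti : ∀ a b : Fin m, a ≤ b → u b ≤ u a := by
    intro a b hab
    rcases eq_or_lt_of_le hab with h | h
    · subst h; exact le_rfl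
    · exact le_of_lt (hustrict a b h)
  have hRs_iff : ∀ x y : Fin m, Rs x y ↔ x ≤ y := by
    intro x y
    constructor
    · intro h
      by_contra hxy
      exact hstrict y x (lt_of_not_ge hxy) h
    · exact hord x y
  set v : Finset (Fin m) → ℕ := fun A => ∑ x ∈ A, u x with hv_def
  set R : Finset (Fin m) → Finset (Fin m) → Prop := fun A B => v B ≤ v A with hR_def
  have hpref : IsPref R := by
    constructor
    · intro A B; exact le_total (v B) (v A)
    · intro A B C hab hbc; exact le_trans hbc hab
  have hresp : Responsive Rs R := by
    constructor
    · intro S x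
      exact Finset.sum_le_sum_of_subset (Finset.subset_insert x S)
    · intro S x y hx hy hxy
      have hle : u y ≤ u x := hu_anti x y ((hRs_iff x y).1 hxy)
      have hxne : x ∉ S.erase y := fun h => hx (Finset.mem_of_mem_erase h)
      have h1 : v (insert x (S.erase y)) = u x + v (S.erase y) :=
        Finset.sum_insert hxne
      have h2 : u y + v (S.erase y) = v S := Finset.add_sum_erase S u hy
      simp only [hR_def]
      omega
  have hcons : Consistent Rs R := by
    intro x y
    have h1 : v {x} = u x := Finset.sum_singleton u x
    have h2 : v {y} = u y := Finset.sum_singleton u y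
    rw [hRs_iff]
    simp only [hR_def, h1, h2]
    constructor
    · intro h
      by_contra hxy
      exact absurd h (not_le_of_gt (hustrict y x (lt_of_not_ge hxy)))
    · exact hu_anti x y
  have hmain := hT R hpref hresp hcons
  -- now derive the contradiction
  set t := (T.filter (fun x => x.val < k)).card with ht_def
  -- upper bound on v T
  have hcardT : T.card ≤ m := le_trans (Finset.card_le_univ T) (by simp)
  have hvT : v T ≤ t * (m*m+1) + m*m := by
    have hsplit : v T = (∑ x ∈ T, (if x.val < k then m*m+1 else 0))
        + ∑ x ∈ T, (m - x.val) := by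
      simp only [hv_def, hu_def]
      rw [Finset.sum_add_distrib]
    have h1 : (∑ x ∈ T, (if x.val < k then m*m+1 else 0)) = t * (m*m+1) := by
      rw [← Finset.sum_filter, Finset.sum_const, smul_eq_mul]
    have h2 : (∑ x ∈ T, (m - x.val)) ≤ m * m := by
      calc (∑ x ∈ T, (m - x.val)) ≤ ∑ _x ∈ T, m :=
            Finset.sum_le_sum (fun x _ => Nat.sub_le m x.val)
        _ = T.card * m := by rw [Finset.sum_const, smul_eq_mul]
        _ ≤ m * m := Nat.mul_le_mul_right m hcardT
    omega
  -- cardinality of the filter on univ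
  have huniv : ((Finset.univ : Finset (Fin m)).filter (fun x => x.val < k)).card = k := by
    have : ((Finset.univ : Finset (Fin m)).filter (fun x => x.val < k))
        = Finset.image (fun i : Fin k => (⟨i.val, lt_of_lt_of_le i.isLt hkm⟩ : Fin m))
            Finset.univ := by
      ext x
      simp only [Finset.mem_filter, Finset.mem_univ, true_and, Finset.mem_image]
      constructor
      · intro hx; exact ⟨⟨x.val, hx⟩, rfl⟩
      · rintro ⟨i, -, rfl⟩; exact i.isLt
    rw [this, Finset.card_image_of_injective _ (fun a b hab => by
      simpa [Fin.ext_iff] using hab)]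
    simp
  have hpartition : ((Finset.univ : Finset (Fin m)).filter (fun x => x.val < k)).card
      = t + (Tᶜ.filter (fun x => x.val < k)).card := by
    rw [ht_def, ← Finset.card_union_of_disjoint, ← Finset.filter_union]
    · congr 1
      rw [Finset.union_compl]
    · exact Finset.disjoint_filter_filter disjoint_compl_right
  have htc : (Tᶜ.filter (fun x => x.val < k)).card = k - t := by omega
  -- lower bound on v Tᶜ
  have hvTc : (k - t) * (m*m+1) ≤ v Tᶜ := by
    calc (k - t) * (m*m+1)
        = ∑ _x ∈ Tᶜ.filter (fun x => x.val < k), (m*m+1) := by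
          rw [Finset.sum_const, smul_eq_mul, htc]
      _ ≤ ∑ x ∈ Tᶜ.filter (fun x => x.val < k), u x := by
          apply Finset.sum_le_sum
          intro x hx
          have hxk : x.val < k := (Finset.mem_filter.1 hx).2
          simp only [hu_def, if_pos hxk]
          omega
      _ ≤ v Tᶜ := Finset.sum_le_sum_of_subset (Finset.filter_subset _ _)
  have hkt : t + 1 ≤ k - t := by omega
  have h1 : (t+1) * (m*m+1) ≤ (k-t) * (m*m+1) := Nat.mul_le_mul_right _ hkt
  have h2 : t * (m*m+1) + m*m + 1 = (t+1) * (m*m+1) := by ring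
  simp only [hR_def] at hmain
  omega
end

section
/- Fix a preference ≽^sing on the single items in S with x_1 ≽^sing x_2 ≽^sing ⋯ ≽^sing x_m, and for each k ∈ {1,…,m} let I_k = {x_1,…,x_k}. If a subset T ⊆ S is possibly agreeable with respect to ≽^sing, then |I_k ∩ T| > k/2 for some k ∈ {1,…,m}. -/
open Finset

lemma card_filter_lt_univ {m k : ℕ} (hk : k ≤ m) :
    ((univ : Finset (Fin m)).filter (fun x => x.val < k)).card = k := by
  have : (univ : Finset (Fin k)).map ⟨Fin.castLE hk, Fin.castLE_injective hk⟩
      = (univ : Finset (Fin m)).filter (fun x => x.val < k) := by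
    ext x
    simp only [mem_map, mem_univ, true_and, mem_filter, Function.Embedding.coeFn_mk]
    constructor
    · rintro ⟨a, rfl⟩; exact a.2
    · rintro h; exact ⟨⟨x.val, h⟩, rfl⟩
  rw [← this, card_map, card_univ, Fintype.card_fin]

lemma filter_split {m k : ℕ} (T : Finset (Fin m)) (hk : k ≤ m) :
    (T.filter (fun x => x.val < k)).card + (Tᶜ.filter (fun x => x.val < k)).card = k := by
  have hd : Disjoint (T.filter (fun x => x.val < k)) (Tᶜ.filter (fun x => x.val < k)) :=
    disjoint_filter_filter disjoint_compl_right
  rw [← card_union_of_disjoint hd, ← filter_union, union_compl]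
  exact card_filter_lt_univ hk


/-- If `x_1 ≽ˢ x_2 ≽ˢ ⋯ ≽ˢ x_m` and `T` is possibly agreeable w.r.t. `Rs`, then
`|I_k ∩ T| > k/2` for some `k ∈ {1,…,m}`. -/
theorem stmt_4 {m : ℕ} (Rs : Fin m → Fin m → Prop) (hRs : IsSingPref Rs)
    (hord : ∀ i j : Fin m, i ≤ j → Rs i j)
    (T : Finset (Fin m)) (hT : PossAgreeable Rs T) :
    ∃ k : ℕ, 1 ≤ k ∧ k ≤ m ∧ k < 2 * (T.filter (fun x => x.val < k)).card := by
  by_contra hcon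
  push_neg at hcon
  obtain ⟨R, hR, hResp, hCons, _, hTcT⟩ := hT
  apply hTcT
  rcases Nat.eq_zero_or_pos m with hm | hm
  · subst hm
    have : Tᶜ = T := by ext x; exact x.elim0
    rw [this]
    exact (hR.1 T T).elim id id
  have hp : T.card = T.card := rfl
  have hq : Tᶜ.card = Tᶜ.card := rfl
  set p := T.card with hpdef
  set q := Tᶜ.card with hqdef
  have hpq_sum : p + q = m := by have h := Finset.card_add_card_compl T; rwa [Fintype.card_fin] at h
  have hcount : ∀ k, 1 ≤ k → k ≤ m →
      (T.filter (fun x => x.val < k)).card ≤ (Tᶜ.filter (fun x => x.val < k)).card := by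
    intro k h1 h2
    have hs := filter_split T h2
    have hc := hcon k h1 h2
    omega
  have hfiltT : T.filter (fun x => x.val < m) = T :=
    filter_true_of_mem (fun x _ => x.2)
  have hfiltTc : Tᶜ.filter (fun x => x.val < m) = Tᶜ :=
    filter_true_of_mem (fun x _ => x.2)
  have hpq : p ≤ q := by
    have := hcount m hm le_rfl
    rw [hfiltT, hfiltTc] at this
    exact this
  set e := T.orderEmbOfFin hpdef.symm with hedef
  set f := Tᶜ.orderEmbOfFin hqdef.symm with hfdef
  have heT : ∀ i, e i ∈ T := fun i => T.orderEmbOfFin_mem hpdef.symm i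
  have hfTc : ∀ i, f i ∈ Tᶜ := fun i => Tᶜ.orderEmbOfFin_mem hqdef.symm i
  have hfe_ne : ∀ (a : Fin q) (b : Fin p), f a ≠ e b := by
    intro a b h
    have h1 := hfTc a
    rw [h] at h1
    exact (mem_compl.1 h1) (heT b)
  -- key lemma
  have key : ∀ i : Fin p, f ⟨i.val, lt_of_lt_of_le i.2 hpq⟩ ≤ e i := by
    intro i
    by_contra hlt
    push_neg at hlt
    set iq : Fin q := ⟨i.val, lt_of_lt_of_le i.2 hpq⟩ with hiq
    set k := (e i).val + 1 with hk
    have hk1 : 1 ≤ k := Nat.succ_le_succ (Nat.zero_le _)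
    have hkm : k ≤ m := (e i).2
    have hsub1 : (Finset.Iic i).image e ⊆ T.filter (fun x => x.val < k) := by
      intro x hx
      obtain ⟨j, hj, rfl⟩ := mem_image.1 hx
      refine mem_filter.2 ⟨heT j, ?_⟩
      have hle : e j ≤ e i := e.monotone (mem_Iic.1 hj)
      have := Fin.le_def.1 hle
      omega
    have h1 : i.val + 1 ≤ (T.filter (fun x => x.val < k)).card := by
      have hc : ((Finset.Iic i).image e).card = i.val + 1 := by
        rw [card_image_of_injective _ e.injective, Fin.card_Iic]
      rw [← hc]
      exact card_le_card hsub1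
    have hsub2 : Tᶜ.filter (fun x => x.val < k) ⊆ (Finset.Iio iq).image f := by
      intro x hx
      obtain ⟨hxc, hxk⟩ := mem_filter.1 hx
      have hxr : x ∈ Set.range f := by
        rw [hfdef, Finset.range_orderEmbOfFin]; exact hxc
      obtain ⟨j, rfl⟩ := hxr
      refine mem_image.2 ⟨j, mem_Iio.2 ?_, rfl⟩
      have hfj : f j < f iq := by
        apply lt_of_le_of_lt _ hlt
        exact Fin.le_def.2 (by omega)
      exact f.strictMono.lt_iff_lt.1 hfj
    have h2 : (Tᶜ.filter (fun x => x.val < k)).card ≤ i.val := by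
      have hc : ((Finset.Iio iq).image f).card = i.val := by
        rw [card_image_of_injective _ f.injective, Fin.card_Iio]
      rw [← hc]
      exact card_le_card hsub2
    have := hcount k hk1 hkm
    omega
  -- the chain of sets
  classical
  set A : ℕ → Finset (Fin m) := fun j =>
    ((univ.filter (fun i : Fin q => i.val < j)).image f) ∪
    ((univ.filter (fun i : Fin p => j ≤ i.val)).image e) with hAdef
  have himgT : (univ : Finset (Fin p)).image e = T := by
    ext x
    simp only [mem_image, mem_univ, true_and]
    constructor
    · rintro ⟨i, rfl⟩; exact heT i
    · intro hx
      have hxr : x ∈ Set.range e := by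
        rw [hedef, Finset.range_orderEmbOfFin]; exact hx
      obtain ⟨i, rfl⟩ := hxr
      exact ⟨i, rfl⟩
  have himgTc : (univ : Finset (Fin q)).image f = Tᶜ := by
    ext x
    simp only [mem_image, mem_univ, true_and]
    constructor
    · rintro ⟨i, rfl⟩; exact hfTc i
    · intro hx
      have hxr : x ∈ Set.range f := by
        rw [hfdef, Finset.range_orderEmbOfFin]; exact hx
      obtain ⟨i, rfl⟩ := hxr
      exact ⟨i, rfl⟩
  have hA0 : A 0 = T := by
    simp only [hAdef]
    have h1 : (univ.filter (fun i : Fin q => i.val < 0)) = ∅ := by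
      apply filter_false_of_mem; intro x _; omega
    have h2 : (univ.filter (fun i : Fin p => 0 ≤ i.val)) = univ := by
      apply filter_true_of_mem; intro x _; omega
    rw [h1, h2, image_empty, empty_union, himgT]
  have hAq : A q = Tᶜ := by
    simp only [hAdef]
    have h1 : (univ.filter (fun i : Fin q => i.val < q)) = univ := by
      apply filter_true_of_mem; intro x _; exact x.2
    have h2 : (univ.filter (fun i : Fin p => q ≤ i.val)) = ∅ := by
      apply filter_false_of_mem; intro x _
      have := x.2; omega
    rw [h1, h2, image_empty, union_empty, himgTc]
  -- step
  have hstep : ∀ j < q, R (A (j + 1)) (A j) := by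
    intro j hjq
    set jq : Fin q := ⟨j, hjq⟩ with hjqdef
    by_cases hjp : j < p
    · set jp : Fin p := ⟨j, hjp⟩ with hjpdef
      have hmem : e jp ∈ A j := by
        simp only [hAdef]
        exact mem_union_right _ (mem_image.2 ⟨jp, mem_filter.2 ⟨mem_univ _, le_rfl⟩, rfl⟩)
      have hnot : f jq ∉ A j := by
        simp only [hAdef]
        intro hx
        rcases mem_union.1 hx with h | h
        · obtain ⟨i, hi, hfe⟩ := mem_image.1 h
          have hival := (mem_filter.1 hi).2
          have : i = jq := f.injective hfe
          rw [this] at hival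
          simp only [hjqdef] at hival
          omega
        · obtain ⟨i, _, hfe⟩ := mem_image.1 h
          exact hfe_ne jq i hfe.symm
      have hrs : Rs (f jq) (e jp) := hord _ _ (key jp)
      have hstep0 := hResp.2 (A j) (f jq) (e jp) hnot hmem hrs
      have heq : A (j + 1) = insert (f jq) ((A j).erase (e jp)) := by
        simp only [hAdef]
        ext x
        simp only [mem_union, mem_image, mem_filter, mem_univ, true_and, mem_insert,
          mem_erase]
        constructor
        · rintro (⟨i, hi, rfl⟩ | ⟨i, hi, rfl⟩)
          · rcases Nat.lt_succ_iff_lt_or_eq.1 hi with hi' | hi'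
            · exact Or.inr ⟨hfe_ne i jp, Or.inl ⟨i, hi', rfl⟩⟩
            · left
              have : i = jq := Fin.ext hi'
              rw [this]
          · refine Or.inr ⟨?_, Or.inr ⟨i, by omega, rfl⟩⟩
            intro hcon2
            have hij : i = jp := e.injective hcon2
            have : i.val = j := by rw [hij]
            omega
        · rintro (rfl | ⟨hne, (⟨i, hi, rfl⟩ | ⟨i, hi, rfl⟩)⟩)
          · exact Or.inl ⟨jq, by simp [hjqdef], rfl⟩
          · exact Or.inl ⟨i, by omega, rfl⟩
          · refine Or.inr ⟨i, ?_, rfl⟩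
            have hij : i ≠ jp := fun h => hne (by rw [h])
            have : i.val ≠ j := fun h => hij (Fin.ext h)
            omega
      rw [heq]
      exact hstep0
    · -- p ≤ j : pure insertion
      push_neg at hjp
      have heq : A (j + 1) = insert (f jq) (A j) := by
        simp only [hAdef]
        ext x
        simp only [mem_union, mem_image, mem_filter, mem_univ, true_and, mem_insert]
        constructor
        · rintro (⟨i, hi, rfl⟩ | ⟨i, hi, rfl⟩)
          · rcases Nat.lt_succ_iff_lt_or_eq.1 hi with hi' | hi'
            · exact Or.inr (Or.inl ⟨i, hi', rfl⟩)
            · left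
              have : i = jq := Fin.ext hi'
              rw [this]
          · have := i.2; omega
        · rintro (rfl | (⟨i, hi, rfl⟩ | ⟨i, hi, rfl⟩))
          · exact Or.inl ⟨jq, by simp [hjqdef], rfl⟩
          · exact Or.inl ⟨i, by omega, rfl⟩
          · exact Or.inr ⟨i, by omega, rfl⟩
      rw [heq]
      exact hResp.1 (A j) (f jq)
  have hchain : ∀ j, j ≤ q → R (A j) T := by
    intro j
    induction j with
    | zero => intro _; rw [hA0]; exact (hR.1 T T).elim id id
    | succ n ih =>
      intro hn
      exact hR.2 _ _ _ (hstep n (by omega)) (ih (by omega))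
  have := hchain q le_rfl
  rwa [hAq] at this
end

section
/- Fix a strict preference ≽^sing on the single items in S with x_1 ≻^sing x_2 ≻^sing ⋯ ≻^sing x_m, and for each k ∈ {1,…,m} let I_k = {x_1,…,x_k}. If a subset T ⊆ S satisfies |I_k ∩ T| > k/2 for some k ∈ {1,…,m}, then T is possibly agreeable with respect to ≽^sing. -/
open Finset

/-- If `x_1 ≻ˢ x_2 ≻ˢ ⋯ ≻ˢ x_m` (a strict ordering) and `|I_k ∩ T| > k/2` for some
`k ∈ {1,…,m}`, then `T` is possibly agreeable w.r.t. `Rs`. -/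
theorem stmt_5 {m : ℕ} (Rs : Fin m → Fin m → Prop) (hRs : IsSingPref Rs)
    (hord : ∀ i j : Fin m, i ≤ j → Rs i j)
    (hstrict : ∀ i j : Fin m, i < j → ¬ Rs j i)
    (T : Finset (Fin m))
    (h : ∃ k : ℕ, 1 ≤ k ∧ k ≤ m ∧ k < 2 * (T.filter (fun x => x.val < k)).card) :
    PossAgreeable Rs T := by
  obtain ⟨k, hk1, hkm, hkT⟩ := h
  have hm : 1 ≤ m := le_trans hk1 hkm
  have hRsIff : ∀ x y : Fin m, Rs x y ↔ x ≤ y := by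
    intro x y
    constructor
    · intro hxy
      by_contra hle
      exact hstrict y x (lt_of_not_ge hle) hxy
    · exact hord x y
  set w : Fin m → ℕ := fun i => (if i.val < k then 4*m^2 else 0) + (m - i.val) with hw
  have hanti : ∀ i j : Fin m, i < j → w j < w i := by
    intro i j hij
    have hij' : i.val < j.val := hij
    have hjm : j.val < m := j.isLt
    have hsub : m - j.val < m - i.val := by omega
    simp only [hw]
    by_cases hi : i.val < k
    · by_cases hj : j.val < k
      · simp only [if_pos hi, if_pos hj]; omega
      · simp only [if_pos hi, if_neg hj]
        nlinarith [Nat.sub_le m j.val]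
    · have hj : ¬ j.val < k := by omega
      simp only [if_neg hi, if_neg hj]; omega
  have hwle : ∀ i j : Fin m, i ≤ j → w j ≤ w i := by
    intro i j hij
    rcases eq_or_lt_of_le hij with rfl | hlt
    · exact le_refl _
    · exact le_of_lt (hanti i j hlt)
  set u : Finset (Fin m) → ℕ := fun A => ∑ i ∈ A, w i with hu
  have hwiff : ∀ x y : Fin m, w y ≤ w x ↔ x ≤ y := by
    intro x y
    constructor
    · intro hle
      by_contra hxy
      exact absurd hle (not_le.mpr (hanti y x (lt_of_not_ge hxy)))
    · exact hwle x y
  -- the key strict inequality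
  have hcardk : (univ.filter (fun x : Fin m => x.val < k)).card = k := by
    have : (univ.filter fun x : Fin m => x.val < k)
        = (univ : Finset (Fin k)).map (Fin.castLEEmb hkm) := by
      ext x
      simp only [mem_filter, mem_univ, true_and, mem_map]
      constructor
      · intro hx
        exact ⟨⟨x.val, hx⟩, by ext; simp⟩
      · rintro ⟨y, -, rfl⟩
        simp [y.isLt]
    rw [this, card_map, card_univ, Fintype.card_fin]
  set t := (T.filter (fun x : Fin m => x.val < k)).card with ht
  have hdisj : Disjoint (T.filter (fun x : Fin m => x.val < k))
      (Tᶜ.filter (fun x : Fin m => x.val < k)) :=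
    disjoint_filter_filter disjoint_compl_right
  have hsplit : t + (Tᶜ.filter (fun x : Fin m => x.val < k)).card = k := by
    rw [ht, ← card_union_of_disjoint hdisj, ← filter_union, union_compl, hcardk]
  have hlow : t * (4*m^2) ≤ u T := by
    calc t * (4*m^2) = (T.filter (fun x : Fin m => x.val < k)).card • (4*m^2) := by
          rw [smul_eq_mul, ht]
      _ ≤ ∑ i ∈ T.filter (fun x : Fin m => x.val < k), w i := by
          apply Finset.card_nsmul_le_sum
          intro i hi
          have := (mem_filter.mp hi).2
          simp only [hw, if_pos this]
          omega
      _ ≤ u T := Finset.sum_le_sum_of_subset (filter_subset _ _)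
  have hup : u Tᶜ ≤ (k - t) * (4*m^2) + m*m := by
    have h1 : u Tᶜ = (∑ i ∈ Tᶜ, (if i.val < k then 4*m^2 else 0)) + ∑ i ∈ Tᶜ, (m - i.val) := by
      simp only [hu, hw]
      rw [Finset.sum_add_distrib]
    have h2 : (∑ i ∈ Tᶜ, (if i.val < k then 4*m^2 else 0)) = (k - t) * (4*m^2) := by
      rw [← Finset.sum_filter, Finset.sum_const, smul_eq_mul]
      congr 1
      omega
    have h3 : (∑ i ∈ Tᶜ, (m - i.val)) ≤ m * m := by
      calc (∑ i ∈ Tᶜ, (m - i.val)) ≤ Tᶜ.card • m :=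
            Finset.sum_le_card_nsmul _ _ _ (fun i _ => Nat.sub_le m i.val)
        _ ≤ m * m := by
            rw [smul_eq_mul]
            have : Tᶜ.card ≤ m := by
              simpa using Finset.card_le_card (Finset.subset_univ Tᶜ)
            exact Nat.mul_le_mul_right m this
    omega
  have key : u Tᶜ < u T := by
    have htk : t ≤ k := by omega
    have hd : k - t + 1 ≤ t := by omega
    nlinarith [hlow, hup, hd, hm]
  refine ⟨fun A B => u B ≤ u A, ⟨fun A B => le_total _ _, fun A B C h1 h2 => le_trans h2 h1⟩,
    ⟨?_, ?_⟩, ?_, le_of_lt key, not_le.mpr key⟩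
  · intro S x
    exact Finset.sum_le_sum_of_subset (Finset.subset_insert x S)
  · intro S x y hx hy hxy
    have hxy' : x ≤ y := (hRsIff x y).mp hxy
    have hxe : x ∉ S.erase y := fun hc => hx (Finset.mem_of_mem_erase hc)
    have h1 : u (insert x (S.erase y)) = w x + u (S.erase y) := Finset.sum_insert hxe
    have h2 : w y + u (S.erase y) = u S := Finset.add_sum_erase S w hy
    have := hwle x y hxy'
    omega
  · intro x y
    simp only [hu, Finset.sum_singleton]
    rw [hwiff, hRsIff]
end

section
/- Assume that there are two players with monotonic preferences ≽_1 and ≽_2 on the subsets of a set S of m items. Then there exists a subset T ⊆ S with |T| ≤ ⌈(m+1)/2⌉ such that T is agreeable to both players, i.e., T ≽_1 S∖T and T ≽_2 S∖T. -/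
open Finset

/-- A monotonic complete transitive preference weakly prefers supersets. -/
lemma superset_pref {m : ℕ} {R : Finset (Fin m) → Finset (Fin m) → Prop}
    (hc : ∀ A B, R A B ∨ R B A) (ht : ∀ A B C, R A B → R B C → R A C)
    (hm : MonotonicPref R) {A B : Finset (Fin m)} (hBA : B ⊆ A) : R A B := by
  have key : ∀ (C B : Finset (Fin m)), R (B ∪ C) B := by
    intro C
    induction C using Finset.induction_on with
    | empty => intro B; simpa using (hc B B).elim id id
    | @insert x C hx ih =>
        intro B
        have h1 : R (insert x (B ∪ C)) (B ∪ C) := hm _ x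
        have := ht _ _ _ h1 (ih B)
        simpa [Finset.union_insert] using this
  have hu : B ∪ (A \ B) = A := Finset.union_sdiff_of_subset hBA
  simpa [hu] using key (A \ B) B

/-- Two players with monotonic preferences: there is a subset `T` of size at most
`⌈(m+1)/2⌉ = (m+2)/2` (ℕ-division) that is agreeable to both. -/
theorem stmt_6 {m : ℕ} (R1 R2 : Finset (Fin m) → Finset (Fin m) → Prop)
    (h1 : IsPref R1) (h2 : IsPref R2)
    (hm1 : MonotonicPref R1) (hm2 : MonotonicPref R2) :
    ∃ T : Finset (Fin m), T.card ≤ (m + 2) / 2 ∧ R1 T Tᶜ ∧ R2 T Tᶜ := by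
  by_contra hcon
  push_neg at hcon
  set k := m / 2 with hk
  set s := (m + 2) / 2 with hs
  have hks : k ≤ s := by omega
  have hk1s : k + 1 ≤ s := by omega
  have hmks : m - k ≤ s := by omega
  have hkm : k ≤ m := by omega
  have cardc : ∀ X : Finset (Fin m), Xᶜ.card = m - X.card := by
    intro X
    simp [Finset.card_compl]
  -- exclusion: no small set is agreeable to both
  have hexcl : ∀ T : Finset (Fin m), T.card ≤ s → R1 T Tᶜ → R2 T Tᶜ → False := by
    intro T hT ha hb
    exact hcon T hT ha hb
  have sup1 : ∀ {A B : Finset (Fin m)}, B ⊆ A → R1 A B :=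
    fun h => superset_pref h1.1 h1.2 hm1 h
  have sup2 : ∀ {A B : Finset (Fin m)}, B ⊆ A → R2 A B :=
    fun h => superset_pref h2.1 h2.2 hm2 h
  -- structure of k-sets under the exclusion hypothesis
  have q1 : ∀ X : Finset (Fin m), X.card = k → R1 X Xᶜ → R2 Xᶜ X := by
    intro X hX hg1
    have hnot : ¬ R2 X Xᶜ := fun hg2 => hexcl X (hX ▸ hks) hg1 hg2
    rcases h2.1 X Xᶜ with h | h
    · exact absurd h hnot
    · exact h
  have q1' : ∀ X : Finset (Fin m), X.card = k → R1 X Xᶜ → ¬ R1 Xᶜ X := by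
    intro X hX hg1 hbad
    have hcs : Xᶜ.card ≤ s := by rw [cardc, hX]; exact hmks
    have h1' : R1 Xᶜ (Xᶜ)ᶜ := by rwa [compl_compl]
    have h2' : R2 Xᶜ (Xᶜ)ᶜ := by rw [compl_compl]; exact q1 X hX hg1
    exact hexcl Xᶜ hcs h1' h2'
  have q2 : ∀ X : Finset (Fin m), X.card = k → ¬ R1 X Xᶜ → R2 X Xᶜ := by
    intro X hX hn
    have hg1c : R1 Xᶜ X := (h1.1 X Xᶜ).resolve_left hn
    have hcs : Xᶜ.card ≤ s := by rw [cardc, hX]; exact hmks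
    have hn2c : ¬ R2 Xᶜ X := by
      intro hbad
      have h1' : R1 Xᶜ (Xᶜ)ᶜ := by rwa [compl_compl]
      have h2' : R2 Xᶜ (Xᶜ)ᶜ := by rwa [compl_compl]
      exact hexcl Xᶜ hcs h1' h2'
    exact (h2.1 X Xᶜ).resolve_right hn2c
  -- union of a 1-good and a 2-good set of small total size is agreeable to both
  have combine : ∀ X Y : Finset (Fin m), (X ∪ Y).card ≤ s →
      R1 X Xᶜ → R2 Y Yᶜ → False := by
    intro X Y hcard hgx hgy
    set T := X ∪ Y with hT
    have hXT : X ⊆ T := Finset.subset_union_left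
    have hYT : Y ⊆ T := Finset.subset_union_right
    have hTX : Tᶜ ⊆ Xᶜ := Finset.compl_subset_compl.mpr hXT
    have hTY : Tᶜ ⊆ Yᶜ := Finset.compl_subset_compl.mpr hYT
    have hg1T : R1 T Tᶜ := h1.2 _ _ _ (h1.2 _ _ _ (sup1 hXT) hgx) (sup1 hTX)
    have hg2T : R2 T Tᶜ := h2.2 _ _ _ (h2.2 _ _ _ (sup2 hYT) hgy) (sup2 hTY)
    exact hexcl T hcard hg1T hg2T
  -- the flip lemma: for disjoint k-sets, agreeability for player 1 flips
  have flip : ∀ A B : Finset (Fin m), A.card = k → B.card = k → B ⊆ Aᶜ →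
      (R1 A Aᶜ ↔ ¬ R1 B Bᶜ) := by
    intro A B hA hB hBA
    have hAB : A ⊆ Bᶜ := by
      intro x hx
      simp only [Finset.mem_compl]
      intro hxB
      have := hBA hxB
      simp [Finset.mem_compl, hx] at this
    constructor
    · intro hgA hgB
      -- Bᶜ ≽1 A ≽1 Aᶜ ≽1 B hence R1 Bᶜ B, contradicting q1' B
      have hchain : R1 Bᶜ B := h1.2 _ _ _ (h1.2 _ _ _ (sup1 hAB) hgA) (sup1 hBA)
      exact q1' B hB hgB hchain
    · intro hnB
      by_contra hnA
      -- from ¬R1 A Aᶜ: R2 A Aᶜ, so chain player 2: Bᶜ ≽2 A ≽2 Aᶜ ≽2 B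
      have hg2A : R2 A Aᶜ := q2 A hA hnA
      have hchain : R2 Bᶜ B := h2.2 _ _ _ (h2.2 _ _ _ (sup2 hAB) hg2A) (sup2 hBA)
      have hcs : Bᶜ.card ≤ s := by rw [cardc, hB]; exact hmks
      have hg1Bc : R1 Bᶜ B := (h1.1 B Bᶜ).resolve_left hnB
      have h1' : R1 Bᶜ (Bᶜ)ᶜ := by rwa [compl_compl]
      have h2' : R2 Bᶜ (Bᶜ)ᶜ := by rwa [compl_compl]
      exact hexcl Bᶜ hcs h1' h2'
  -- swap-chain induction
  have claim : ∀ n : ℕ, ∀ A B : Finset (Fin m), A.card = k → B.card = k →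
      (A \ B).card = n → R1 A Aᶜ → ¬ R1 B Bᶜ → False := by
    intro n
    induction n with
    | zero =>
        intro A B hA hB hcd hgA hnB
        have hsub : A ⊆ B := by
          rw [← Finset.sdiff_eq_empty_iff_subset]
          exact Finset.card_eq_zero.mp hcd
        have : A = B := Finset.eq_of_subset_of_card_le hsub (by omega)
        exact hnB (this ▸ hgA)
    | succ n ih =>
        intro A B hA hB hcd hgA hnB
        have hABne : (A \ B).Nonempty := by
          rw [← Finset.card_pos, hcd]; omega
        obtain ⟨x, hx⟩ := hABne
        have hBAcard : (B \ A).card = n + 1 := by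
          have h1c := Finset.card_sdiff_add_card_inter A B
          have h2c := Finset.card_sdiff_add_card_inter B A
          rw [Finset.inter_comm B A] at h2c
          omega
        have hBAne : (B \ A).Nonempty := by
          rw [← Finset.card_pos, hBAcard]; omega
        obtain ⟨y, hy⟩ := hBAne
        have hxA : x ∈ A := (Finset.mem_sdiff.mp hx).1
        have hxB : x ∉ B := (Finset.mem_sdiff.mp hx).2
        have hyB : y ∈ B := (Finset.mem_sdiff.mp hy).1
        have hyA : y ∉ A := (Finset.mem_sdiff.mp hy).2
        set A' := insert y (A.erase x) with hA'
        have hyAe : y ∉ A.erase x := fun h => hyA (Finset.mem_of_mem_erase h)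
        have hA'card : A'.card = k := by
          rw [hA', Finset.card_insert_of_notMem hyAe, Finset.card_erase_of_mem hxA, hA]
          have hk0 : 1 ≤ k := by
            by_contra h
            have : k = 0 := by omega
            rw [this] at hA
            rw [Finset.card_eq_zero.mp hA] at hxA
            exact absurd hxA (Finset.notMem_empty x)
          omega
        have hsd : A' \ B = (A \ B).erase x := by
          ext z
          simp only [hA', Finset.mem_sdiff, Finset.mem_insert, Finset.mem_erase]
          constructor
          · rintro ⟨hz1 | ⟨hz1, hz2⟩, hz3⟩
            · exact absurd hyB (hz1 ▸ hz3)
            · exact ⟨hz1, hz2, hz3⟩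
          · rintro ⟨hz1, hz2, hz3⟩
            exact ⟨Or.inr ⟨hz1, hz2⟩, hz3⟩
        have hsdcard : (A' \ B).card = n := by
          rw [hsd, Finset.card_erase_of_mem (by exact hx), hcd]; omega
        by_cases hgA' : R1 A' A'ᶜ
        · exact ih A' B hA'card hB hsdcard hgA' hnB
        · -- A' is 2-good, A is 1-good, and A ∪ A' = insert y A has card ≤ k + 1
          have hg2A' : R2 A' A'ᶜ := q2 A' hA'card hgA'
          have hunion : A ∪ A' = insert y A := by
            rw [hA']
            ext z
            simp only [Finset.mem_union, Finset.mem_insert, Finset.mem_erase]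
            constructor
            · rintro (h | h | ⟨_, h⟩)
              · exact Or.inr h
              · exact Or.inl h
              · exact Or.inr h
            · rintro (h | h)
              · exact Or.inr (Or.inl h)
              · exact Or.inl h
          have hucard : (A ∪ A').card ≤ s := by
            rw [hunion]
            calc (insert y A).card ≤ A.card + 1 := Finset.card_insert_le _ _
              _ ≤ s := by omega
          exact combine A A' hucard hgA hg2A'
  -- put it together
  obtain ⟨A, -, hA⟩ := Finset.exists_subset_card_eq (s := (Finset.univ : Finset (Fin m))) (n := k)
    (by simp [hkm])
  have hAc : k ≤ Aᶜ.card := by rw [cardc, hA]; omega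
  obtain ⟨B, hBsub, hB⟩ := Finset.exists_subset_card_eq (s := Aᶜ) (n := k) hAc
  have hflip := flip A B hA hB hBsub
  by_cases hgA : R1 A Aᶜ
  · exact claim (A \ B).card A B hA hB rfl hgA (hflip.mp hgA)
  · have hgB : R1 B Bᶜ := by
      by_contra hnB
      exact hgA (hflip.mpr hnB)
    exact claim (B \ A).card B A hB hA rfl hgB hgA
end

section
/- For every m ≥ 1 there exist two monotonic preferences ≽_1 and ≽_2 on the subsets of a set S of m items such that every subset T ⊆ S that is agreeable to both players (i.e., T ≽_1 S∖T and T ≽_2 S∖T) satisfies |T| ≥ ⌈(m+1)/2⌉. -/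
open Finset

/-- Tightness for two players: for every `m ≥ 1` there are monotonic preferences such that
every subset agreeable to both players has size at least `⌈(m+1)/2⌉ = (m+2)/2`. -/
theorem stmt_7 (m : ℕ) (hm : 1 ≤ m) :
    ∃ R1 R2 : Finset (Fin m) → Finset (Fin m) → Prop,
      IsPref R1 ∧ IsPref R2 ∧ MonotonicPref R1 ∧ MonotonicPref R2 ∧
      ∀ T : Finset (Fin m), R1 T Tᶜ → R2 T Tᶜ → (m + 2) / 2 ≤ T.card := by
  set a : Fin m := ⟨0, hm⟩ with ha
  refine ⟨fun A B => B.card < A.card ∨ (A.card = B.card ∧ (a ∈ B → a ∈ A)),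
    fun A B => B.card < A.card ∨ (A.card = B.card ∧ (a ∈ A → a ∈ B)), ?_, ?_, ?_, ?_, ?_⟩
  · constructor
    · intro A B
      by_cases h : a ∈ A <;> by_cases h' : a ∈ B <;> simp [h, h'] <;> omega
    · intro A B C h1 h2
      rcases h1 with h1 | ⟨h1, h1'⟩ <;> rcases h2 with h2 | ⟨h2, h2'⟩ <;>
        first | omega | exact Or.inr ⟨by omega, fun h => h1' (h2' h)⟩
  · constructor
    · intro A B
      by_cases h : a ∈ A <;> by_cases h' : a ∈ B <;> simp [h, h'] <;> omega
    · intro A B C h1 h2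
      rcases h1 with h1 | ⟨h1, h1'⟩ <;> rcases h2 with h2 | ⟨h2, h2'⟩ <;>
        first | omega | exact Or.inr ⟨by omega, fun h => h2' (h1' h)⟩
  · intro T x
    by_cases h : x ∈ T
    · simp [Finset.insert_eq_self.2 h]
    · exact Or.inl (by rw [Finset.card_insert_of_notMem h]; omega)
  · intro T x
    by_cases h : x ∈ T
    · simp [Finset.insert_eq_self.2 h]
    · exact Or.inl (by rw [Finset.card_insert_of_notMem h]; omega)
  · intro T h1 h2
    have hc : Tᶜ.card = m - T.card := by
      simp [Finset.card_compl]
    have hT : T.card ≤ m := by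
      simpa using Finset.card_le_card (Finset.subset_univ T)
    have hmem : a ∈ T ∨ a ∈ Tᶜ := by
      by_cases h : a ∈ T
      · exact Or.inl h
      · exact Or.inr (Finset.mem_compl.2 h)
    have hnot : ¬ (a ∈ T ∧ a ∈ Tᶜ) := by
      rintro ⟨h, h'⟩
      exact (Finset.mem_compl.1 h') h
    rcases h1 with h1 | ⟨h1, h1'⟩
    · omega
    · rcases h2 with h2 | ⟨h2, h2'⟩
      · omega
      · by_cases h : a ∈ T
        · exact absurd ⟨h, h2' h⟩ hnot
        · rcases hmem with h' | h'
          · exact absurd h' h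
          · exact absurd ⟨h1' h', h'⟩ hnot
end

section
/- Assume that there are two players with preferences ≽^sing_1 and ≽^sing_2 on the single items of a set S of m items. Then there exists a subset T ⊆ S with |T| ≤ ⌈(m+1)/2⌉ such that T is necessarily agreeable with respect to both ≽^sing_1 and ≽^sing_2. -/
open Finset

lemma pref_refl {m : ℕ} {R : Finset (Fin m) → Finset (Fin m) → Prop}
    (hR : IsPref R) (A : Finset (Fin m)) : R A A := (hR.1 A A).elim id id

lemma pref_union {m : ℕ} {R : Finset (Fin m) → Finset (Fin m) → Prop}
    (hR : IsPref R) (hM : MonotonicPref R) (A C : Finset (Fin m)) :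
    R (A ∪ C) A := by
  classical
  induction C using Finset.induction_on with
  | empty => simpa using pref_refl hR A
  | @insert x Cs hx ih =>
      rw [Finset.union_insert]
      exact hR.2 _ _ _ (hM (A ∪ Cs) x) ih

lemma pref_subset {m : ℕ} {R : Finset (Fin m) → Finset (Fin m) → Prop}
    (hR : IsPref R) (hM : MonotonicPref R) {A B : Finset (Fin m)} (h : A ⊆ B) : R B A := by
  classical
  have := pref_union hR hM A (B \ A)
  rwa [Finset.union_sdiff_of_subset h] at this

lemma swap_chain {m : ℕ} {R : Finset (Fin m) → Finset (Fin m) → Prop}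
    {Rs : Fin m → Fin m → Prop}
    (hR : IsPref R) (hresp : Responsive Rs R) (f : Fin m → Fin m)
    (C : Finset (Fin m)) (hout : ∀ x ∈ C, f x ∉ C) (hpref : ∀ x ∈ C, Rs (f x) x)
    (hinj : ∀ x ∈ C, ∀ y ∈ C, f x = f y → x = y) :
    ∀ U : Finset (Fin m), U ⊆ C → R (U.image f ∪ (C \ U)) C := by
  classical
  intro U
  induction U using Finset.induction_on with
  | empty => intro _; simpa using pref_refl hR C
  | @insert y Us hyU ih =>
      intro hsub
      have hyC : y ∈ C := hsub (Finset.mem_insert_self y Us)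
      have hUsC : Us ⊆ C := fun a ha => hsub (Finset.mem_insert_of_mem ha)
      have h1 : f y ∉ Us.image f ∪ (C \ Us) := by
        intro hmemu
        rcases Finset.mem_union.1 hmemu with h | h
        · rcases Finset.mem_image.1 h with ⟨z, hz, hze⟩
          have := hinj z (hUsC hz) y hyC hze
          exact hyU (this ▸ hz)
        · exact hout y hyC (Finset.mem_sdiff.1 h).1
      have h2 : y ∉ Us.image f := by
        intro h
        rcases Finset.mem_image.1 h with ⟨z, hz, hze⟩
        exact hout z (hUsC hz) (hze ▸ hyC)
      have hstep : R (insert (f y) ((Us.image f ∪ (C \ Us)).erase y)) (Us.image f ∪ (C \ Us)) :=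
        hresp.2 _ _ _ h1 (Finset.mem_union_right _ (Finset.mem_sdiff.2 ⟨hyC, hyU⟩)) (hpref y hyC)
      have heq : insert (f y) ((Us.image f ∪ (C \ Us)).erase y)
          = (insert y Us).image f ∪ (C \ insert y Us) := by
        rw [Finset.erase_union_distrib, Finset.erase_eq_of_notMem h2,
          Finset.image_insert, Finset.insert_union]
        congr 1
        congr 1
        ext a
        simp only [Finset.mem_erase, Finset.mem_sdiff, Finset.mem_insert]
        tauto
      rw [← heq]
      exact hR.2 _ _ _ hstep (ih hUsC)

lemma nec_of_inj {m : ℕ} {Rs : Fin m → Fin m → Prop} (T : Finset (Fin m)) (f : Fin m → Fin m)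
    (hinj : ∀ x ∈ Tᶜ, ∀ y ∈ Tᶜ, f x = f y → x = y)
    (hmem : ∀ x ∈ Tᶜ, f x ∈ T) (hpref : ∀ x ∈ Tᶜ, Rs (f x) x) :
    NecAgreeable Rs T := by
  intro R hR hresp _
  have hout : ∀ x ∈ Tᶜ, f x ∉ Tᶜ := by
    intro x hx h
    exact (Finset.mem_compl.1 h) (hmem x hx)
  have hch := swap_chain hR hresp f Tᶜ hout hpref hinj Tᶜ (Finset.Subset.refl _)
  rw [Finset.sdiff_self, Finset.union_empty] at hch
  have h2 : Tᶜ.image f ⊆ T := by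
    intro a ha
    rcases Finset.mem_image.1 ha with ⟨x, hx, rfl⟩
    exact hmem x hx
  exact hR.2 _ _ _ (pref_subset hR hresp.1 h2) hch

lemma exists_sorted_enum {m : ℕ} (hm : 0 < m) (Rs : Fin m → Fin m → Prop)
    (h : IsSingPref Rs) :
    ∃ (g : ℕ → Fin m) (inv : Fin m → ℕ),
      (∀ a b : ℕ, a ≤ b → b < m → Rs (g a) (g b)) ∧
      (∀ j, j < m → inv (g j) = j) ∧
      (∀ x, inv x < m ∧ g (inv x) = x) := by
  classical
  set le : Fin m → Fin m → Bool := fun a b => decide (Rs a b) with hle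
  have htrans : ∀ a b c, le a b = true → le b c = true → le a c = true := by
    intro a b c hab hbc
    simp only [hle, decide_eq_true_eq] at *
    exact h.2 _ _ _ hab hbc
  have htotal : ∀ a b, (le a b || le b a) = true := by
    intro a b
    simp only [hle, Bool.or_eq_true, decide_eq_true_eq]
    exact h.1 a b
  set l := (List.finRange m).mergeSort le with hldef
  have hperm : l.Perm (List.finRange m) := List.mergeSort_perm _ _
  have hlen : l.length = m := by rw [hperm.length_eq, List.length_finRange]
  have hnodup : l.Nodup := hperm.symm.nodup (List.nodup_finRange m)
  have hsorted := List.pairwise_mergeSort htrans htotal (List.finRange m)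
  rw [← hldef] at hsorted
  refine ⟨fun n => if hn : n < m then l.get ⟨n, by omega⟩ else l.get ⟨0, by omega⟩,
    fun x => List.idxOf x l, ?_, ?_, ?_⟩
  · intro a b hab hbm
    have ham : a < m := lt_of_le_of_lt hab hbm
    simp only [dif_pos ham, dif_pos hbm]
    rcases lt_or_eq_of_le hab with hlt | rfl
    · have := List.pairwise_iff_get.1 hsorted ⟨a, by omega⟩ ⟨b, by omega⟩
        (by simp [Fin.lt_def, hlt])
      simpa only [hle, decide_eq_true_eq] using this
    · exact (h.1 _ _).elim id id
  · intro j hj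
    simp only [dif_pos hj]
    exact List.get_idxOf hnodup ⟨j, by omega⟩
  · intro x
    have hx : x ∈ l := hperm.mem_iff.2 (List.mem_finRange x)
    have hidx : List.idxOf x l < l.length := List.idxOf_lt_length_iff.2 hx
    have hidxm : List.idxOf x l < m := by omega
    refine ⟨hidxm, ?_⟩
    simp only [dif_pos hidxm]
    exact List.idxOf_get hidx

/-- Two players with preferences on single items: there is a subset `T` of size at most
`⌈(m+1)/2⌉ = (m+2)/2` that is necessarily agreeable w.r.t. both. -/
theorem stmt_8 {m : ℕ} (Rs1 Rs2 : Fin m → Fin m → Prop)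
    (h1 : IsSingPref Rs1) (h2 : IsSingPref Rs2) :
    ∃ T : Finset (Fin m), T.card ≤ (m + 2) / 2 ∧
      NecAgreeable Rs1 T ∧ NecAgreeable Rs2 T := by
  classical
  rcases Nat.eq_zero_or_pos m with rfl | hm
  · exact ⟨∅, by simp, nec_of_inj ∅ id (fun x _ => x.elim0) (fun x _ => x.elim0)
      (fun x _ => x.elim0), nec_of_inj ∅ id (fun x _ => x.elim0) (fun x _ => x.elim0)
      (fun x _ => x.elim0)⟩
  · obtain ⟨g, inv, hmono, hinvg, hginv⟩ := exists_sorted_enum hm Rs1 h1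
    set p := (m - 1) / 2 with hp
    obtain ⟨s, o, hso⟩ : ∃ s o : ℕ → ℕ, ∀ i,
        (s i = 2*i-1 ∧ o i = 2*i ∨ s i = 2*i ∧ o i = 2*i-1) ∧ Rs2 (g (s i)) (g (o i)) := by
      refine ⟨fun i => if Rs2 (g (2*i-1)) (g (2*i)) then 2*i-1 else 2*i,
        fun i => if Rs2 (g (2*i-1)) (g (2*i)) then 2*i else 2*i-1, fun i => ?_⟩
      by_cases hcase : Rs2 (g (2*i-1)) (g (2*i))
      · refine ⟨Or.inl ⟨?_, ?_⟩, ?_⟩ <;> simp only [if_pos hcase]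
        exact hcase
      · refine ⟨Or.inr ⟨?_, ?_⟩, ?_⟩ <;> simp only [if_neg hcase]
        exact (h2.1 _ _).resolve_left hcase
    set T : Finset (Fin m) := insert (g 0)
      (((Finset.Icc 1 p).image (fun i => g (s i))) ∪
        (if m % 2 = 0 then {g (m-1)} else ∅)) with hT
    have hginj : ∀ a b, a < m → b < m → g a = g b → a = b := fun a b ha hb hab => by
      rw [← hinvg a ha, ← hinvg b hb, hab]
    have hsil : ∀ i, 1 ≤ i → i ≤ p → s i < m ∧ o i < m := by
      intro i hi1 hip
      have h2i : 2*i < m := by omega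
      rcases (hso i).1 with ⟨hs, ho⟩ | ⟨hs, ho⟩ <;> omega
    have hcard : T.card ≤ (m + 2) / 2 := by
      have c1 := Finset.card_insert_le (g 0)
        (((Finset.Icc 1 p).image (fun i => g (s i))) ∪
          (if m % 2 = 0 then ({g (m-1)} : Finset (Fin m)) else ∅))
      have c2 := Finset.card_union_le ((Finset.Icc 1 p).image (fun i => g (s i)))
        (if m % 2 = 0 then ({g (m-1)} : Finset (Fin m)) else ∅)
      have c3 : ((Finset.Icc 1 p).image (fun i => g (s i))).card ≤ p := by
        refine le_trans (Finset.card_image_le) ?_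
        simp [Nat.card_Icc]
      rw [hT]
      by_cases hpar : m % 2 = 0
      · have c4 : (if m % 2 = 0 then ({g (m-1)} : Finset (Fin m)) else ∅).card ≤ 1 := by
          rw [if_pos hpar]; simp
        omega
      · have c4 : (if m % 2 = 0 then ({g (m-1)} : Finset (Fin m)) else ∅).card = 0 := by
          rw [if_neg hpar]; simp
        omega
    have hmemT : ∀ i, 1 ≤ i → i ≤ p → g (s i) ∈ T := fun i hi1 hip =>
      Finset.mem_insert_of_mem (Finset.mem_union_left _
        (Finset.mem_image.2 ⟨i, Finset.mem_Icc.2 ⟨hi1, hip⟩, rfl⟩))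
    have h0T : g 0 ∈ T := Finset.mem_insert_self _ _
    have hlastT : m % 2 = 0 → g (m-1) ∈ T := fun he =>
      Finset.mem_insert_of_mem (Finset.mem_union_right _
        (by rw [if_pos he]; exact Finset.mem_singleton_self _))
    have hcompl : ∀ x ∈ Tᶜ, ∃ i, 1 ≤ i ∧ i ≤ p ∧ x = g (o i) ∧ inv x = o i := by
      intro x hx
      have hxT : x ∉ T := Finset.mem_compl.1 hx
      obtain ⟨hjm, hgj⟩ := hginv x
      set j := inv x with hj
      have hj0 : j ≠ 0 := fun h => hxT (by rw [← hgj, h]; exact h0T)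
      have hjlast : m % 2 = 0 → j ≠ m - 1 := fun he h => hxT (by rw [← hgj, h]; exact hlastT he)
      have hjs : ∀ i, 1 ≤ i → i ≤ p → j ≠ s i := fun i hi1 hip h =>
        hxT (by rw [← hgj, h]; exact hmemT i hi1 hip)
      have hjle : j ≤ 2*p := by
        by_cases hpar : m % 2 = 0
        · have := hjlast hpar; omega
        · omega
      have hi1 : 1 ≤ (j+1)/2 := by omega
      have hip : (j+1)/2 ≤ p := by omega
      have hjo : j = o ((j+1)/2) := by
        have hne := hjs _ hi1 hip
        rcases (hso ((j+1)/2)).1 with ⟨hs, ho⟩ | ⟨hs, ho⟩ <;> omega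
      exact ⟨_, hi1, hip, by rw [← hgj]; exact congrArg g hjo, hjo⟩
    have hidx2 : ∀ i j, 1 ≤ i → j = o i → (j+1)/2 = i := by
      intro i j hi1 hjo
      rcases (hso i).1 with ⟨hs, ho⟩ | ⟨hs, ho⟩ <;> omega
    refine ⟨T, hcard, ?_, ?_⟩
    · -- player 1
      refine nec_of_inj T
        (fun x => g (if (inv x + 1)/2 ≤ 1 then 0 else s ((inv x + 1)/2 - 1))) ?_ ?_ ?_
      · intro x hx y hy hxy
        obtain ⟨i, hi1, hip, hxg, hxinv⟩ := hcompl x hx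
        obtain ⟨i', hi1', hip', hyg, hyinv⟩ := hcompl y hy
        simp only [hxinv, hidx2 i (o i) hi1 rfl, hyinv, hidx2 i' (o i') hi1' rfl] at hxy
        have hii : i = i' := by
          by_cases hc : i ≤ 1 <;> by_cases hc' : i' ≤ 1
          · omega
          · rw [if_pos hc, if_neg hc'] at hxy
            have him : 1 ≤ i' - 1 ∧ i' - 1 ≤ p := by omega
            have := hginj _ _ hm (hsil _ him.1 him.2).1 hxy
            rcases (hso (i'-1)).1 with ⟨hs, ho⟩ | ⟨hs, ho⟩ <;> omega
          · rw [if_neg hc, if_pos hc'] at hxy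
            have him : 1 ≤ i - 1 ∧ i - 1 ≤ p := by omega
            have := hginj _ _ (hsil _ him.1 him.2).1 hm hxy
            rcases (hso (i-1)).1 with ⟨hs, ho⟩ | ⟨hs, ho⟩ <;> omega
          · rw [if_neg hc, if_neg hc'] at hxy
            have him : 1 ≤ i - 1 ∧ i - 1 ≤ p := by omega
            have him' : 1 ≤ i' - 1 ∧ i' - 1 ≤ p := by omega
            have := hginj _ _ (hsil _ him.1 him.2).1 (hsil _ him'.1 him'.2).1 hxy
            rcases (hso (i-1)).1 with ⟨hs, ho⟩ | ⟨hs, ho⟩ <;>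
              rcases (hso (i'-1)).1 with ⟨hs', ho'⟩ | ⟨hs', ho'⟩ <;> omega
        rw [hxg, hyg, hii]
      · intro x hx
        obtain ⟨i, hi1, hip, hxg, hxinv⟩ := hcompl x hx
        simp only [hxinv, hidx2 i (o i) hi1 rfl]
        by_cases hc : i ≤ 1
        · rw [if_pos hc]; exact h0T
        · rw [if_neg hc]
          exact hmemT (i-1) (by omega) (by omega)
      · intro x hx
        obtain ⟨i, hi1, hip, hxg, hxinv⟩ := hcompl x hx
        simp only [hxinv, hidx2 i (o i) hi1 rfl]
        rw [hxg]
        have hoi : o i < m := (hsil i hi1 hip).2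
        by_cases hc : i ≤ 1
        · rw [if_pos hc]
          exact hmono 0 (o i) (by omega) hoi
        · rw [if_neg hc]
          refine hmono _ _ ?_ hoi
          rcases (hso (i-1)).1 with ⟨hs, ho⟩ | ⟨hs, ho⟩ <;>
            rcases (hso i).1 with ⟨hs', ho'⟩ | ⟨hs', ho'⟩ <;> omega
    · -- player 2
      refine nec_of_inj T (fun x => g (s ((inv x + 1)/2))) ?_ ?_ ?_
      · intro x hx y hy hxy
        obtain ⟨i, hi1, hip, hxg, hxinv⟩ := hcompl x hx
        obtain ⟨i', hi1', hip', hyg, hyinv⟩ := hcompl y hy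
        simp only [hxinv, hidx2 i (o i) hi1 rfl, hyinv, hidx2 i' (o i') hi1' rfl] at hxy
        have := hginj _ _ (hsil i hi1 hip).1 (hsil i' hi1' hip').1 hxy
        have hii : i = i' := by
          rcases (hso i).1 with ⟨hs, ho⟩ | ⟨hs, ho⟩ <;>
            rcases (hso i').1 with ⟨hs', ho'⟩ | ⟨hs', ho'⟩ <;> omega
        rw [hxg, hyg, hii]
      · intro x hx
        obtain ⟨i, hi1, hip, hxg, hxinv⟩ := hcompl x hx
        simp only [hxinv, hidx2 i (o i) hi1 rfl]
        exact hmemT i hi1 hip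
      · intro x hx
        obtain ⟨i, hi1, hip, hxg, hxinv⟩ := hcompl x hx
        simp only [hxinv, hidx2 i (o i) hi1 rfl]
        rw [hxg]
        exact (hso i).2
end

section
/- For every m ≥ 1 there exist preferences ≽^sing_1 and ≽^sing_2 on the single items of a set S of m items such that every subset T ⊆ S that is necessarily agreeable with respect to both ≽^sing_1 and ≽^sing_2 satisfies |T| ≥ ⌈(m+1)/2⌉. In particular, for odd m = 2k+1 one may take ≽^sing_1 strict; for even m = 2k one may take x_1 ≻^sing_1 x_2 ≻^sing_1 ⋯ ≻^sing_1 x_{2k} and x_{2k} ≻^sing_2 x_{2k−1} ≻^sing_2 ⋯ ≻^sing_2 x_1. -/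
open Finset

lemma sumPref {m : ℕ} (Rs : Fin m → Fin m → Prop) (u : Fin m → ℕ)
    (hrep : ∀ x y, Rs x y ↔ u y ≤ u x) (T : Finset (Fin m))
    (hT : NecAgreeable Rs T) :
    ∑ j ∈ Tᶜ, u j ≤ ∑ j ∈ T, u j := by
  apply hT (fun A B => ∑ j ∈ B, u j ≤ ∑ j ∈ A, u j)
  · exact ⟨fun A B => le_total _ _, fun A B C h1 h2 => le_trans h2 h1⟩
  · constructor
    · intro S x
      exact Finset.sum_le_sum_of_subset (Finset.subset_insert x S)
    · intro S x y hx hy hxy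
      have hxe : x ∉ S.erase y := fun h => hx (Finset.mem_of_mem_erase h)
      rw [Finset.sum_insert hxe, ← Finset.add_sum_erase S u hy]
      exact Nat.add_le_add_right ((hrep x y).mp hxy) _
  · intro x y
    simp only [Finset.sum_singleton]
    exact (hrep x y).symm

lemma count_le {m : ℕ} (Rs : Fin m → Fin m → Prop) (T : Finset (Fin m))
    (hT : NecAgreeable Rs T) (P : Fin m → Prop) [DecidablePred P]
    (v : Fin m → ℕ) (M : ℕ)
    (hrep : ∀ x y, Rs x y ↔
      (if P y then M else 0) + v y ≤ (if P x then M else 0) + v x)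
    (hS : ∑ j ∈ T, v j < M) :
    (univ.filter P).card ≤ 2 * (T.filter P).card := by
  have hsum := sumPref Rs (fun j => (if P j then M else 0) + v j) hrep T hT
  have decomp : ∀ A : Finset (Fin m),
      (∑ j ∈ A, ((if P j then M else 0) + v j))
        = (A.filter P).card * M + ∑ j ∈ A, v j := by
    intro A
    rw [Finset.sum_add_distrib]
    congr 1
    rw [← Finset.sum_filter, Finset.sum_const, smul_eq_mul]
  rw [decomp T, decomp Tᶜ] at hsum
  set a := (T.filter P).card with ha
  set b := (Tᶜ.filter P).card with hb
  have hsplit : a + b = (univ.filter P).card := by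
    have hu : (T ∪ Tᶜ).filter P = univ.filter P := by rw [Finset.union_compl]
    rw [← hu, Finset.filter_union,
      Finset.card_union_of_disjoint
        (Finset.disjoint_filter_filter disjoint_compl_right)]
  have hba : b ≤ a := by
    by_contra h
    push_neg at h
    have h1 : (a + 1) * M ≤ b * M := Nat.mul_le_mul_right M h
    have : b * M < b * M := by
      calc b * M ≤ b * M + ∑ j ∈ Tᶜ, v j := Nat.le_add_right _ _
        _ ≤ a * M + ∑ j ∈ T, v j := hsum
        _ < a * M + M := by omega
        _ = (a + 1) * M := by ring
        _ ≤ b * M := h1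
    exact absurd this (lt_irrefl _)
  omega

/-- Tightness: for every `m ≥ 1` there are preferences on single items such that every
subset necessarily agreeable w.r.t. both has size at least `⌈(m+1)/2⌉ = (m+2)/2`. -/
theorem stmt_9 (m : ℕ) (hm : 1 ≤ m) :
    ∃ Rs1 Rs2 : Fin m → Fin m → Prop,
      IsSingPref Rs1 ∧ IsSingPref Rs2 ∧
      ∀ T : Finset (Fin m),
        NecAgreeable Rs1 T → NecAgreeable Rs2 T → (m + 2) / 2 ≤ T.card := by
  refine ⟨fun x y => x ≤ y, fun x y => y ≤ x,
    ⟨fun x y => le_total x y, fun x y z => le_trans⟩,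
    ⟨fun x y => le_total y x, fun x y z h1 h2 => le_trans h2 h1⟩, ?_⟩
  intro T h1 h2
  by_contra hcard
  push_neg at hcard
  have hTle : T.card ≤ m := le_trans (Finset.card_le_univ T) (by simp)
  have hTcard : 2 * T.card ≤ m := by omega
  have hne : T ≠ univ := by
    intro h
    rw [h, Finset.card_univ, Fintype.card_fin] at hTcard
    omega
  obtain ⟨c, hc⟩ : ∃ c, c ∉ T := by
    by_contra h
    push_neg at h
    exact hne (Finset.eq_univ_iff_forall.mpr h)
  obtain ⟨M, hM1, hM2⟩ : ∃ M, m < M ∧ m * m < M :=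
    ⟨m * m + m + 1, by nlinarith, by nlinarith⟩
  have hsumbound : ∀ w : Fin m → ℕ, (∀ j : Fin m, w j ≤ m) → ∑ j ∈ T, w j < M := by
    intro w hw
    have h1 : ∑ j ∈ T, w j ≤ ∑ _j ∈ T, m := Finset.sum_le_sum (fun j _ => hw j)
    rw [Finset.sum_const, smul_eq_mul] at h1
    have h2 : T.card * m ≤ m * m := Nat.mul_le_mul_right m hTle
    omega
  have k1 := count_le (fun x y => x ≤ y) T h1 (fun j => j.val ≤ c.val)
    (fun j => m - j.val) M ?_ (hsumbound _ (fun j => Nat.sub_le _ _))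
  rotate_left
  · intro x y
    have hx := x.isLt
    have hy := y.isLt
    simp only [Fin.le_def]
    split_ifs <;> omega
  have k2 := count_le (fun x y => y ≤ x) T h2 (fun j => c.val ≤ j.val)
    (fun j => j.val) M ?_ (hsumbound _ (fun j => le_of_lt j.isLt))
  rotate_left
  · intro x y
    have hx := x.isLt
    have hy := y.isLt
    simp only [Fin.le_def]
    split_ifs <;> omega
  -- totals
  have htot : (univ.filter (fun j : Fin m => j.val ≤ c.val)).card
      + (univ.filter (fun j : Fin m => c.val ≤ j.val)).card = m + 1 := by
    have hcup : (univ.filter (fun j : Fin m => j.val ≤ c.val))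
        ∪ (univ.filter (fun j : Fin m => c.val ≤ j.val)) = univ := by
      ext j
      simp only [Finset.mem_union, Finset.mem_filter, Finset.mem_univ, true_and]
      exact iff_of_true (Nat.le_total j.val c.val) trivial
    have hcap : (univ.filter (fun j : Fin m => j.val ≤ c.val))
        ∩ (univ.filter (fun j : Fin m => c.val ≤ j.val)) = {c} := by
      ext j
      simp only [Finset.mem_inter, Finset.mem_filter, Finset.mem_univ, true_and,
        Finset.mem_singleton]
      constructor
      · rintro ⟨hj1, hj2⟩
        exact Fin.ext (le_antisymm hj1 hj2)
      · rintro rfl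
        exact ⟨le_refl _, le_refl _⟩
    have := Finset.card_union_add_card_inter
      (univ.filter (fun j : Fin m => j.val ≤ c.val))
      (univ.filter (fun j : Fin m => c.val ≤ j.val))
    rw [hcup, hcap, Finset.card_univ, Fintype.card_fin, Finset.card_singleton] at this
    omega
  have hdisj : (T.filter (fun j : Fin m => j.val ≤ c.val)).card
      + (T.filter (fun j : Fin m => c.val ≤ j.val)).card ≤ T.card := by
    rw [← Finset.card_union_of_disjoint]
    · exact Finset.card_le_card (Finset.union_subset (Finset.filter_subset _ _)
        (Finset.filter_subset _ _))
    · rw [Finset.disjoint_left]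
      intro j hj1 hj2
      rw [Finset.mem_filter] at hj1 hj2
      have : j = c := Fin.ext (le_antisymm hj1.2 hj2.2)
      exact hc (this ▸ hj1.1)
  omega
end

section
/- For every m ≥ 1 and n ≥ 1 there exist n monotonic preferences ≽_1,…,≽_n on the subsets of a set S of m items such that every subset T ⊆ S that is agreeable to all n players (i.e., T ≽_i S∖T for every i) satisfies |T| ≥ min(⌈(m+n−1)/2⌉, m). -/
open Finset

/-- Tightness for `n` players: there exist monotonic preferences such that every subset
agreeable to all players has size at least `min(⌈(m+n−1)/2⌉, m) = min((m+n)/2, m)`. -/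

theorem stmt_12 (m n : ℕ) (hm : 1 ≤ m) (hn : 1 ≤ n) :
    ∃ R : Fin n → Finset (Fin m) → Finset (Fin m) → Prop,
      (∀ i, IsPref (R i)) ∧ (∀ i, MonotonicPref (R i)) ∧
      ∀ T : Finset (Fin m), (∀ i, R i T Tᶜ) → min ((m + n) / 2) m ≤ T.card := by
  set k := min ((m + n) / 2) m with hk
  set d := 2 * k - m with hd
  have hkfacts : m + d = 2 * k ∧ d ≤ n ∧ d ≤ m ∧ k ≤ m := by omega
  set f : Fin n → Finset (Fin m) → ℕ := fun i T =>
    2 * T.card + 2 * d * (if i.val + 1 < d then (if ∃ x ∈ T, x.val = i.val then 1 else 0)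
      else (T.filter (fun x => d ≤ x.val + 1)).card) with hf
  refine ⟨fun i A B => f i B ≤ f i A,
    fun i => ⟨fun A B => le_total _ _, fun A B C h1 h2 => le_trans h2 h1⟩,
    fun i T x => ?_, fun T hT => ?_⟩
  · -- monotonicity
    have h1 : T.card ≤ (insert x T).card := card_le_card (subset_insert _ _)
    simp only [hf]
    by_cases hc : i.val + 1 < d
    · simp only [if_pos hc]
      by_cases he : ∃ y ∈ T, y.val = i.val
      · obtain ⟨y, hy, hyv⟩ := he
        have he2 : ∃ y ∈ insert x T, y.val = i.val := ⟨y, mem_insert_of_mem hy, hyv⟩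
        simp only [if_pos (⟨y, hy, hyv⟩ : ∃ y ∈ T, y.val = i.val), if_pos he2]
        omega
      · simp only [if_neg he, mul_zero, add_zero]
        exact le_trans (by omega) (Nat.le_add_right _ _)
    · simp only [if_neg hc]
      have h2 : (T.filter (fun x => d ≤ x.val + 1)).card
          ≤ ((insert x T).filter (fun x => d ≤ x.val + 1)).card :=
        card_le_card (filter_subset_filter _ (subset_insert _ _))
      exact Nat.add_le_add (by omega) (Nat.mul_le_mul_left _ h2)
  · -- main bound
    by_contra hlt
    push_neg at hlt
    have htm : T.card ≤ m := by
      have := card_le_card (subset_univ T)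
      simpa using this
    have hcompl : Tᶜ.card = m - T.card := by simp [card_compl]
    rcases Nat.eq_zero_or_pos d with hd0 | hd1
    · have h0 := hT ⟨0, hn⟩
      simp only [hf, hd0, mul_zero, zero_mul, add_zero] at h0
      omega
    · by_cases hall : ∀ x : Fin m, x.val + 1 < d → x ∈ T
      · have hi : d - 1 < n := by omega
        have h0 := hT ⟨d - 1, hi⟩
        have hcond : ¬ ((⟨d - 1, hi⟩ : Fin n).val + 1 < d) := by simp; omega
        simp only [hf, if_neg hcond] at h0
        have hfc : Tᶜ.filter (fun x => d ≤ x.val + 1) = Tᶜ := by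
          apply filter_true_of_mem
          intro y hy
          by_contra hcy
          push_neg at hcy
          exact (mem_compl.mp hy) (hall y (by omega))
        rw [hfc, hcompl] at h0
        have hAB := card_filter_add_card_filter_not
          (s := T) (p := fun x : Fin m => d ≤ x.val + 1)
        have hB : d - 1 ≤ (T.filter (fun x : Fin m => ¬ d ≤ x.val + 1)).card := by
          rw [← card_range (d - 1)]
          apply card_le_card_of_injOn (fun j => (⟨min j (m - 1), by omega⟩ : Fin m))
          · intro j hj
            rw [coe_range, Set.mem_Iio] at hj
            rw [mem_coe]
            have hjd : j + 1 < d := by omega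
            have hjm : min j (m - 1) = j := by omega
            refine mem_filter.mpr ⟨hall ⟨min j (m-1), by omega⟩ (by show min j (m-1) + 1 < d; omega),
              by show ¬ d ≤ min j (m-1) + 1; omega⟩
          · intro a ha b hb hab
            simp only [coe_range, Set.mem_Iio] at ha hb
            simp only [Fin.mk.injEq] at hab
            omega
        set t := T.card with ht
        set A := (T.filter (fun x : Fin m => d ≤ x.val + 1)).card with hA
        set B := (T.filter (fun x : Fin m => ¬ d ≤ x.val + 1)).card with hBdef
        have h3 : t + 2 ≤ (m - t) + d := by omega
        have h1 : d * (t + 2) ≤ d * ((m - t) + d) := Nat.mul_le_mul_left _ h3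
        have h2 : d * (A + d) ≤ d * (t + 1) := Nat.mul_le_mul_left _ (by omega)
        nlinarith [h0, h1, h2, h3]
      · push_neg at hall
        obtain ⟨x, hx1, hx2⟩ := hall
        have hxn : x.val < n := by omega
        have h0 := hT ⟨x.val, hxn⟩
        have hcond : (⟨x.val, hxn⟩ : Fin n).val + 1 < d := hx1
        have heT : ¬ ∃ y ∈ T, y.val = (⟨x.val, hxn⟩ : Fin n).val := by
          rintro ⟨y, hy, hyv⟩
          exact hx2 (by rwa [show y = x from Fin.ext hyv] at hy)
        have heC : ∃ y ∈ Tᶜ, y.val = (⟨x.val, hxn⟩ : Fin n).val :=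
          ⟨x, mem_compl.mpr hx2, rfl⟩
        simp only [hf, if_pos hcond, if_pos heC, if_neg heT, mul_one, mul_zero, add_zero] at h0
        omega
end

section
/- For every m ≥ 3 there exist three responsive preferences ≽_1, ≽_2, ≽_3 on the subsets of a set S of m items such that every subset T ⊆ S that is agreeable to all three players (i.e., T ≽_i S∖T for i = 1, 2, 3) satisfies |T| ≥ ⌈m/2⌉ + 1. -/
open Finset

/-- A preference on subsets is (self-)responsive if it is monotonic and
`(T \ {y}) ∪ {x} ≽ T` whenever `x ∉ T`, `y ∈ T` and `{x} ≽ {y}`. -/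
def SelfResponsive {m : ℕ} (R : Finset (Fin m) → Finset (Fin m) → Prop) : Prop :=
  MonotonicPref R ∧
    ∀ (T : Finset (Fin m)) (x y : Fin m),
      x ∉ T → y ∈ T → R {x} {y} → R (insert x (T.erase y)) T

/-- utility: size plus twice the number of "good" items. -/
def uG {m : ℕ} (G T : Finset (Fin m)) : ℕ := T.card + 2 * (T ∩ G).card

/-- the preference induced by `uG`. -/
def RG {m : ℕ} (G : Finset (Fin m)) (A B : Finset (Fin m)) : Prop := uG G B ≤ uG G A

lemma RG_isPref {m : ℕ} (G : Finset (Fin m)) : IsPref (RG G) :=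
  ⟨fun A B => le_total (uG G B) (uG G A), fun _ _ _ h1 h2 => le_trans h2 h1⟩

lemma RG_selfResponsive {m : ℕ} (G : Finset (Fin m)) : SelfResponsive (RG G) := by
  constructor
  · intro T x
    unfold RG uG
    have h1 : T.card ≤ (insert x T).card := card_le_card (subset_insert x T)
    have h2 : (T ∩ G).card ≤ ((insert x T) ∩ G).card :=
      card_le_card (inter_subset_inter (subset_insert x T) le_rfl)
    omega
  · intro T x y hx hy hxy
    unfold RG uG at *
    have hne : x ≠ y := fun h => hx (h ▸ hy)
    have hxe : x ∉ T.erase y := fun h => hx (mem_of_mem_erase h)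
    have hcard : (insert x (T.erase y)).card = T.card := by
      rw [card_insert_of_notMem hxe, card_erase_of_mem hy]
      have : 1 ≤ T.card := card_pos.mpr ⟨y, hy⟩
      omega
    rw [hcard]
    have hint : (T ∩ G).card ≤ ((insert x (T.erase y)) ∩ G).card := by
      by_cases hyG : y ∈ G
      · -- then x ∈ G
        have hxG : x ∈ G := by
          by_contra hxG
          rw [singleton_inter_of_mem hyG, singleton_inter_of_notMem hxG] at hxy
          simp at hxy
        have hins : (insert x (T.erase y)) ∩ G = insert x ((T.erase y) ∩ G) :=
          insert_inter_of_mem hxG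
        have herase : (T.erase y) ∩ G = (T ∩ G).erase y := erase_inter y T G
        have hxnot : x ∉ (T.erase y) ∩ G := fun h => hxe (mem_of_mem_inter_left h)
        rw [hins, card_insert_of_notMem hxnot, herase,
          card_erase_of_mem (mem_inter.mpr ⟨hy, hyG⟩)]
        have : 1 ≤ (T ∩ G).card := card_pos.mpr ⟨y, mem_inter.mpr ⟨hy, hyG⟩⟩
        omega
      · apply card_le_card
        intro a ha
        have haT := mem_of_mem_inter_left ha
        have haG := mem_of_mem_inter_right ha
        have hay : a ≠ y := fun h => hyG (h ▸ haG)
        exact mem_inter.mpr ⟨mem_insert_of_mem (mem_erase.mpr ⟨hay, haT⟩), haG⟩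
    omega

lemma sum3_le {m : ℕ} (T A B C : Finset (Fin m)) (hAB : Disjoint A B) (hAC : Disjoint A C)
    (hBC : Disjoint B C) :
    (T ∩ A).card + (T ∩ B).card + (T ∩ C).card ≤ T.card := by
  have h1 : Disjoint (T ∩ A) (T ∩ B) := hAB.mono inter_subset_right inter_subset_right
  have h2 : Disjoint (T ∩ A) (T ∩ C) := hAC.mono inter_subset_right inter_subset_right
  have h3 : Disjoint (T ∩ B) (T ∩ C) := hBC.mono inter_subset_right inter_subset_right
  have h4 : Disjoint ((T ∩ A) ∪ (T ∩ B)) (T ∩ C) := disjoint_union_left.mpr ⟨h2, h3⟩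
  calc (T ∩ A).card + (T ∩ B).card + (T ∩ C).card
      = (((T ∩ A) ∪ (T ∩ B)) ∪ (T ∩ C)).card := by
        rw [card_union_of_disjoint h4, card_union_of_disjoint h1]
    _ ≤ T.card := card_le_card (by
        apply union_subset (union_subset inter_subset_left inter_subset_left)
          inter_subset_left)

lemma key_card {m : ℕ} (G T : Finset (Fin m)) :
    (T ∩ G).card + (Tᶜ ∩ G).card = G.card := by
  rw [inter_comm T G, inter_comm Tᶜ G, show G ∩ Tᶜ = G \ T from sdiff_eq.symm]
  exact card_inter_add_card_sdiff G T

lemma final_bound {m : ℕ} (hm : 3 ≤ m) (G1 G2 G3 T : Finset (Fin m))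
    (h12 : Disjoint G1 G2) (h13 : Disjoint G1 G3) (h23 : Disjoint G2 G3)
    (hc1 : G1.card = 1) (hc2 : G2.card = 1) (hc3 : G3.card = m - 3 + m % 2)
    (hT1 : RG G1 T Tᶜ) (hT2 : RG G2 T Tᶜ) (hT3 : RG G3 T Tᶜ) :
    (m + 1) / 2 + 1 ≤ T.card := by
  unfold RG uG at hT1 hT2 hT3
  have k1 := key_card G1 T
  have k2 := key_card G2 T
  have k3 := key_card G3 T
  have hsum := sum3_le T G1 G2 G3 h12 h13 h23
  have hcompl : T.card + Tᶜ.card = m := by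
    rw [Finset.card_add_card_compl, Fintype.card_fin]
  -- first show 2 * T.card is large enough
  have key : m + 2 + (if m % 2 = 1 then 1 else 0) ≤ 2 * T.card := by
    rcases Nat.eq_zero_or_pos (T ∩ G1).card with h|hp1
    · have h2 : m + 2 ≤ 2 * T.card := by omega
      rcases Nat.mod_two_eq_zero_or_one m with hp|hp <;> simp [hp] <;> omega
    rcases Nat.eq_zero_or_pos (T ∩ G2).card with h|hp2
    · have h2 : m + 2 ≤ 2 * T.card := by omega
      rcases Nat.mod_two_eq_zero_or_one m with hp|hp <;> simp [hp] <;> omega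
    by_cases h3 : 2 * (T ∩ G3).card < G3.card
    · have h2 : m + 2 ≤ 2 * T.card := by omega
      rcases Nat.mod_two_eq_zero_or_one m with hp|hp <;> simp [hp] <;> omega
    · -- all three majorities in T
      rcases Nat.mod_two_eq_zero_or_one m with hp|hp <;> simp [hp] <;> omega
  rcases Nat.mod_two_eq_zero_or_one m with hp|hp <;> simp [hp] at key <;> omega

/-- Tightness for three players: for every `m ≥ 3` there exist responsive preferences such
that every subset agreeable to all three players has size at least `⌈m/2⌉ + 1`. -/
theorem stmt_14 (m : ℕ) (hm : 3 ≤ m) :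
    ∃ R1 R2 R3 : Finset (Fin m) → Finset (Fin m) → Prop,
      IsPref R1 ∧ IsPref R2 ∧ IsPref R3 ∧
      SelfResponsive R1 ∧ SelfResponsive R2 ∧ SelfResponsive R3 ∧
      ∀ T : Finset (Fin m), R1 T Tᶜ → R2 T Tᶜ → R3 T Tᶜ → (m + 1) / 2 + 1 ≤ T.card := by
  have h0 : (0:ℕ) < m := by omega
  have h1 : (1:ℕ) < m := by omega
  set i0 : Fin m := ⟨0, h0⟩ with hi0
  set i1 : Fin m := ⟨1, h1⟩ with hi1
  have hne01 : i0 ≠ i1 := by simp [hi0, hi1, Fin.ext_iff]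
  by_cases hpar : m % 2 = 1
  · -- m odd
    refine ⟨RG {i0}, RG {i1}, RG ({i0, i1} : Finset (Fin m))ᶜ,
      RG_isPref _, RG_isPref _, RG_isPref _,
      RG_selfResponsive _, RG_selfResponsive _, RG_selfResponsive _, ?_⟩
    intro T hT1 hT2 hT3
    have hcB : ({i0, i1} : Finset (Fin m)).card = 2 := by
      rw [card_insert_of_notMem (by simpa using hne01), card_singleton]
    refine final_bound hm {i0} {i1} ({i0, i1} : Finset (Fin m))ᶜ T
      (disjoint_singleton.mpr hne01)
      (disjoint_compl_right.mono_left (by intro a ha; simp at ha; simp [ha]))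
      (disjoint_compl_right.mono_left (by intro a ha; simp at ha; simp [ha]))
      (card_singleton _) (card_singleton _) ?_ hT1 hT2 hT3
    rw [card_compl, Fintype.card_fin, hcB]
    omega
  · -- m even
    have h2 : m - 1 < m := by omega
    set i2 : Fin m := ⟨m - 1, h2⟩ with hi2
    have hne02 : i0 ≠ i2 := by simp [hi0, hi2, Fin.ext_iff]; omega
    have hne12 : i1 ≠ i2 := by simp [hi1, hi2, Fin.ext_iff]; omega
    refine ⟨RG {i0}, RG {i1}, RG ({i0, i1, i2} : Finset (Fin m))ᶜ,
      RG_isPref _, RG_isPref _, RG_isPref _,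
      RG_selfResponsive _, RG_selfResponsive _, RG_selfResponsive _, ?_⟩
    intro T hT1 hT2 hT3
    have hcB : ({i0, i1, i2} : Finset (Fin m)).card = 3 := by
      rw [card_insert_of_notMem (by simp [hne01, hne02]),
        card_insert_of_notMem (by simpa using hne12), card_singleton]
    refine final_bound hm {i0} {i1} ({i0, i1, i2} : Finset (Fin m))ᶜ T
      (disjoint_singleton.mpr hne01)
      (disjoint_compl_right.mono_left (by intro a ha; simp at ha; simp [ha]))
      (disjoint_compl_right.mono_left (by intro a ha; simp at ha; simp [ha]))
      (card_singleton _) (card_singleton _) ?_ hT1 hT2 hT3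
    rw [card_compl, Fintype.card_fin, hcB]
    omega
end

section
/- Let S = {x_1,…,x_6} and consider the strict preferences on single items ≽^sing_1: x_1 ≻ x_4 ≻ x_5 ≻ x_6 ≻ x_2 ≻ x_3, ≽^sing_2: x_2 ≻ x_5 ≻ x_6 ≻ x_4 ≻ x_3 ≻ x_1, and ≽^sing_3: x_3 ≻ x_6 ≻ x_4 ≻ x_5 ≻ x_1 ≻ x_2. Then every subset T ⊆ S that is necessarily agreeable with respect to all three of ≽^sing_1, ≽^sing_2, ≽^sing_3 satisfies |T| ≥ 5; in particular, no such subset of size at most ⌈6/2⌉ + 1 = 4 exists. -/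
open Finset

lemma count_cond (rank : Fin 6 → ℕ) (hr : ∀ x, rank x ≤ 5)
    (T : Finset (Fin 6)) (h : NecAgreeable (fun x y => rank x ≤ rank y) T) (k : ℕ) :
    (Tᶜ.filter (fun a => rank a < k)).card ≤ (T.filter (fun a => rank a < k)).card := by
  set g : Fin 6 → ℕ := fun a => 100 * (if rank a < k then 1 else 0) + (6 - rank a) with hg
  have hmono : ∀ x y : Fin 6, rank x ≤ rank y → g y ≤ g x := by
    intro x y hxy
    simp only [hg]
    split_ifs <;> omega
  have hR := h (fun A B => ∑ a ∈ B, g a ≤ ∑ a ∈ A, g a)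
    ⟨fun A B => le_total _ _, fun A B C hab hbc => le_trans hbc hab⟩
    ⟨fun T x => Finset.sum_le_sum_of_subset (subset_insert _ _),
     by
      intro S x y hx hy hxy
      have hxe : x ∉ S.erase y := fun hc => hx (mem_of_mem_erase hc)
      rw [Finset.sum_insert hxe, ← Finset.add_sum_erase _ g hy]
      exact Nat.add_le_add (hmono x y hxy) le_rfl⟩
    (by
      intro x y
      simp only [Finset.sum_singleton]
      constructor
      · intro hgle
        by_contra hc
        push_neg at hc
        have h5 := hr x
        simp only [hg] at hgle
        split_ifs at hgle <;> omega
      · exact hmono x y)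
  have key : ∀ A : Finset (Fin 6),
      ∑ a ∈ A, g a = 100 * (A.filter (fun a => rank a < k)).card + ∑ a ∈ A, (6 - rank a) := by
    intro A
    simp only [hg, Finset.sum_add_distrib, ← Finset.mul_sum, Finset.sum_boole, Nat.cast_id]
  have bound : ∀ A : Finset (Fin 6), ∑ a ∈ A, (6 - rank a) ≤ 36 := by
    intro A
    calc ∑ a ∈ A, (6 - rank a) ≤ ∑ _a ∈ A, 6 := Finset.sum_le_sum (fun a _ => Nat.sub_le _ _)
    _ = A.card * 6 := by rw [Finset.sum_const, smul_eq_mul]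
    _ ≤ 36 := by have := Finset.card_le_univ A; simp at this; omega
  have hR' : ∑ a ∈ Tᶜ, g a ≤ ∑ a ∈ T, g a := hR
  rw [key, key] at hR'
  have b1 := bound T
  have b2 := bound Tᶜ
  omega

/-- Ranks encoding `x_1 ≻ x_4 ≻ x_5 ≻ x_6 ≻ x_2 ≻ x_3` (item `x_i` is `(i-1 : Fin 6)`). -/
def rank1 : Fin 6 → ℕ := ![0, 4, 5, 1, 2, 3]

/-- Ranks encoding `x_2 ≻ x_5 ≻ x_6 ≻ x_4 ≻ x_3 ≻ x_1`. -/
def rank2 : Fin 6 → ℕ := ![5, 0, 4, 3, 1, 2]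

/-- Ranks encoding `x_3 ≻ x_6 ≻ x_4 ≻ x_5 ≻ x_1 ≻ x_2`. -/
def rank3 : Fin 6 → ℕ := ![4, 5, 0, 2, 3, 1]

/-- For the three preferences on single items of Example 5.1, every subset that is
necessarily agreeable with respect to all three contains at least `5 > ⌈6/2⌉ + 1 = 4` items. -/
theorem stmt_18 (T : Finset (Fin 6))
    (h1 : NecAgreeable (fun x y => rank1 x ≤ rank1 y) T)
    (h2 : NecAgreeable (fun x y => rank2 x ≤ rank2 y) T)
    (h3 : NecAgreeable (fun x y => rank3 x ≤ rank3 y) T) :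
    5 ≤ T.card := by
  have c1 := count_cond rank1 (by decide) T h1
  have c2 := count_cond rank2 (by decide) T h2
  have c3 := count_cond rank3 (by decide) T h3
  have final : ∀ T : Finset (Fin 6),
      ((Tᶜ.filter (fun a => rank1 a < 1)).card ≤ (T.filter (fun a => rank1 a < 1)).card) →
      ((Tᶜ.filter (fun a => rank1 a < 3)).card ≤ (T.filter (fun a => rank1 a < 3)).card) →
      ((Tᶜ.filter (fun a => rank2 a < 1)).card ≤ (T.filter (fun a => rank2 a < 1)).card) →
      ((Tᶜ.filter (fun a => rank2 a < 3)).card ≤ (T.filter (fun a => rank2 a < 3)).card) →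
      ((Tᶜ.filter (fun a => rank3 a < 1)).card ≤ (T.filter (fun a => rank3 a < 1)).card) →
      ((Tᶜ.filter (fun a => rank3 a < 3)).card ≤ (T.filter (fun a => rank3 a < 3)).card) →
      5 ≤ T.card := by decide
  exact final T (c1 1) (c1 3) (c2 1) (c2 3) (c3 1) (c3 3)
end

section
/- For odd m = 2k+1, fix a preference ≽^sing on the single items with x_1 ≽^sing x_2 ≽^sing ⋯ ≽^sing x_{2k+1}. Then the set {x_1, x_3, x_5, …, x_{2k+1}} of the odd-indexed items is necessarily agreeable with respect to ≽^sing. -/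
open Finset

/-- For `m = 2k+1` items with `x_1 ≽ˢ x_2 ≽ˢ ⋯ ≽ˢ x_{2k+1}` (item `x_i` is
`(i-1 : Fin (2k+1))`), the set `{x_1, x_3, …, x_{2k+1}}` of odd-indexed items (even `Fin`
values) is necessarily agreeable w.r.t. `≽ˢ`. -/
theorem stmt_19 (k : ℕ) (Rs : Fin (2 * k + 1) → Fin (2 * k + 1) → Prop)
    (hRs : IsSingPref Rs)
    (hord : ∀ i j : Fin (2 * k + 1), i ≤ j → Rs i j) :
    NecAgreeable Rs (Finset.univ.filter (fun x => x.val % 2 = 0)) := by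
  intro R hR hResp hCons
  obtain ⟨htot, htrans⟩ := hR
  set A : ℕ → Finset (Fin (2 * k + 1)) := fun j =>
    univ.filter (fun x => (x.val < 2 * j ∧ x.val % 2 = 0) ∨ (2 * j ≤ x.val ∧ x.val % 2 = 1))
    with hA
  have hstep : ∀ j, j < k → R (A (j + 1)) (A j) := by
    intro j hj
    have h2j : 2 * j < 2 * k + 1 := by omega
    have h2j1 : 2 * j + 1 < 2 * k + 1 := by omega
    have hx : (⟨2 * j, h2j⟩ : Fin (2 * k + 1)) ∉ A j := by simp [hA]
    have hy : (⟨2 * j + 1, h2j1⟩ : Fin (2 * k + 1)) ∈ A j := by simp [hA]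
    have hrs : Rs ⟨2 * j, h2j⟩ ⟨2 * j + 1, h2j1⟩ := hord _ _ (by simp [Fin.le_def])
    have hr := hResp.2 (A j) _ _ hx hy hrs
    have heq : insert (⟨2 * j, h2j⟩ : Fin (2 * k + 1))
        ((A j).erase ⟨2 * j + 1, h2j1⟩) = A (j + 1) := by
      ext x
      simp [hA, Fin.ext_iff]
      omega
    rwa [heq] at hr
  have hchain : ∀ j, j ≤ k → R (A j) (A 0) := by
    intro j
    induction j with
    | zero =>
      intro _
      rcases htot (A 0) (A 0) with h | h <;> exact h
    | succ n ih =>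
      intro h
      exact htrans _ _ _ (hstep n (by omega)) (ih (by omega))
  have hA0 : A 0 = (univ.filter (fun x : Fin (2 * k + 1) => x.val % 2 = 0))ᶜ := by
    ext x
    simp only [hA, Finset.mem_compl, Finset.mem_filter, Finset.mem_univ, true_and]
    omega
  have h2k : 2 * k < 2 * k + 1 := by omega
  have hT : insert (⟨2 * k, h2k⟩ : Fin (2 * k + 1)) (A k) =
      univ.filter (fun x : Fin (2 * k + 1) => x.val % 2 = 0) := by
    ext x
    simp only [hA, Finset.mem_insert, Finset.mem_filter, Finset.mem_univ, true_and, Fin.ext_iff, Fin.val_mk]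
    have := x.isLt
    omega
  have hmono := hResp.1 (A k) ⟨2 * k, h2k⟩
  rw [hT] at hmono
  rw [← hA0]
  exact htrans _ _ _ hmono (hchain k le_rfl)
end
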